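/- arXiv:1410.3375 — 7 statements merged into one kernel-verified Lean document; each statement's English description precedes it below -/
import Mathlib

section
/- Let G be a graph containing a clique H on k ≥ 3 vertices, and let v be a vertex of G outside H such that v has at least one neighbour in H and at least one non-neighbour in H. Then G contains an induced k-vertex subgraph H̃ with |V(H) ∩ V(H̃)| = k−1 such that the number of edges of H̃ differs in parity from the number of edges of H (which is C(k,2)). -/
open scoped Classical
open Finset

/-- Number of edges of the subgraph of `G` induced by the vertex set `U`. -/
noncomputable def inducedEdges {V : Type*} (G : SimpleGraph V) (U : Finset V) : ℕ :=
  Nat.card {e : Sym2 V // e ∈ G.edgeSet ∧ ∀ v ∈ e, v ∈ U}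

lemma inducedEdges_aux {V : Type*} [Fintype V] [DecidableEq V] (G : SimpleGraph V)
    [DecidableRel G.Adj] (W : Finset V) :
    inducedEdges G W = (G.edgeFinset.filter (fun e => ∀ x ∈ e, x ∈ W)).card := by
  have : {e : Sym2 V // e ∈ G.edgeSet ∧ ∀ v ∈ e, v ∈ W} =
      {e : Sym2 V // e ∈ (G.edgeFinset.filter (fun e => ∀ x ∈ e, x ∈ W))} := by
    congr 1
    ext e
    simp [SimpleGraph.mem_edgeFinset]
  rw [inducedEdges, this, Nat.card_eq_fintype_card, Fintype.card_coe]

/-- Key counting: edges in `insert v s` where `s` is a clique and `v ∉ s`. -/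
lemma inducedEdges_insert_clique {V : Type*} [Fintype V] [DecidableEq V] (G : SimpleGraph V)
    [DecidableRel G.Adj] (s : Finset V) (hs : G.IsClique s) (v : V) (hv : v ∉ s) :
    inducedEdges G (insert v s) = s.card.choose 2 + (s.filter (G.Adj v)).card := by
  rw [inducedEdges_aux]
  set W := insert v s with hW
  have hsplit : G.edgeFinset.filter (fun e => ∀ x ∈ e, x ∈ W) =
      (s.offDiag.image Sym2.mk.uncurry) ∪ ((s.filter (G.Adj v)).image (fun w => s(v, w))) := by
    ext e
    induction e using Sym2.ind with
    | _ x y =>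
      simp only [Finset.mem_filter, SimpleGraph.mem_edgeFinset, Finset.mem_union,
        Finset.mem_image, Finset.mem_offDiag, Sym2.mem_iff, SimpleGraph.mem_edgeSet]
      constructor
      · rintro ⟨hadj, hmem⟩
        have hx : x ∈ W := hmem x (Or.inl rfl)
        have hy : y ∈ W := hmem y (Or.inr rfl)
        rw [hW, Finset.mem_insert] at hx hy
        rcases hx with rfl | hx
        · right
          exact ⟨y, ⟨hy.resolve_left (fun h => G.irrefl (h ▸ hadj)), hadj⟩, rfl⟩
        · rcases hy with rfl | hy
          · right
            exact ⟨x, ⟨hx, hadj.symm⟩, Sym2.eq_swap⟩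
          · left
            exact ⟨(x, y), ⟨hx, hy, hadj.ne⟩, rfl⟩
      · rintro (⟨⟨a, b⟩, ⟨ha, hb, hab⟩, he⟩ | ⟨w, ⟨hw1, hw2⟩, he⟩)
        · have hadj : G.Adj a b := hs ha hb hab
          rw [Function.uncurry_apply_pair, Sym2.eq_iff] at he
          rcases he with ⟨rfl, rfl⟩ | ⟨rfl, rfl⟩
          · exact ⟨hadj, fun z hz => by
              rcases hz with rfl | rfl <;>
                exact Finset.mem_insert_of_mem (by assumption)⟩
          · exact ⟨hadj.symm, fun z hz => by
              rcases hz with rfl | rfl <;>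
                exact Finset.mem_insert_of_mem (by assumption)⟩
        · rw [Sym2.eq_iff] at he
          rcases he with ⟨rfl, rfl⟩ | ⟨rfl, rfl⟩
          · exact ⟨hw2, fun z hz => by
              rcases hz with rfl | rfl
              · exact Finset.mem_insert_self _ _
              · exact Finset.mem_insert_of_mem hw1⟩
          · exact ⟨hw2.symm, fun z hz => by
              rcases hz with rfl | rfl
              · exact Finset.mem_insert_of_mem hw1
              · exact Finset.mem_insert_self _ _⟩
  rw [hsplit, Finset.card_union_of_disjoint, Sym2.card_image_offDiag,
    Finset.card_image_of_injective _ (fun a b hab => (Sym2.congr_right).1 hab)]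
  · rw [Finset.disjoint_left]
    rintro e he hf
    simp only [Finset.mem_image, Finset.mem_offDiag] at he hf
    obtain ⟨⟨a, b⟩, ⟨ha, hb, hab⟩, rfl⟩ := he
    obtain ⟨w, hw, hew⟩ := hf
    rw [Function.uncurry_apply_pair, Sym2.eq_iff] at hew
    rcases hew with ⟨rfl, rfl⟩ | ⟨rfl, rfl⟩
    · exact hv ha
    · exact hv hb

theorem stmt_0 {V : Type*} [Fintype V] [DecidableEq V] (G : SimpleGraph V) (k : ℕ)
    (hk : 3 ≤ k) (U : Finset V) (hU : G.IsNClique k U) (v : V) (hv : v ∉ U)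
    (hnb : ∃ u ∈ U, G.Adj v u) (hnnb : ∃ u ∈ U, ¬ G.Adj v u) :
    ∃ W : Finset V, W.card = k ∧ (W ∩ U).card = k - 1 ∧
      ¬ (inducedEdges G W ≡ k.choose 2 [MOD 2]) := by
  classical
  obtain ⟨u₁, hu₁U, hu₁⟩ := hnb
  obtain ⟨u₂, hu₂U, hu₂⟩ := hnnb
  set A := U.filter (G.Adj v) with hA
  have hu₁A : u₁ ∈ A := Finset.mem_filter.2 ⟨hu₁U, hu₁⟩
  have hu₂A : u₂ ∉ A := fun h => hu₂ (Finset.mem_filter.1 h).2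
  set a := A.card with ha
  -- choose u and define W
  obtain ⟨u, huU, hd⟩ : ∃ u ∈ U, ((U.erase u).filter (G.Adj v)).card % 2 ≠ (k - 1) % 2 := by
    have hfe : ∀ u, (U.erase u).filter (G.Adj v) = A.erase u := by
      intro u; ext x; simp [hA, Finset.mem_erase, Finset.mem_filter]; tauto
    by_cases hpar : a % 2 = (k - 1) % 2
    · refine ⟨u₁, hu₁U, ?_⟩
      rw [hfe, Finset.card_erase_of_mem hu₁A, ← ha, ← hpar]
      have hpos : 0 < a := Finset.card_pos.2 ⟨u₁, hu₁A⟩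
      omega
    · refine ⟨u₂, hu₂U, ?_⟩
      rw [hfe, Finset.erase_eq_of_notMem hu₂A, ← ha]
      exact hpar
  refine ⟨insert v (U.erase u), ?_, ?_, ?_⟩
  · rw [Finset.card_insert_of_notMem (fun h => hv (Finset.mem_of_mem_erase h)),
      Finset.card_erase_of_mem huU, hU.2]
    omega
  · have : insert v (U.erase u) ∩ U = U.erase u := by
      ext x
      simp only [Finset.mem_inter, Finset.mem_insert, Finset.mem_erase]
      constructor
      · rintro ⟨rfl | ⟨hne, hx⟩, hxU⟩
        · exact absurd hxU hv
        · exact ⟨hne, hxU⟩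
      · rintro ⟨hne, hx⟩; exact ⟨Or.inr ⟨hne, hx⟩, hx⟩
    rw [this, Finset.card_erase_of_mem huU, hU.2]
  · have hclique : G.IsClique (U.erase u) := hU.1.subset (Finset.erase_subset _ _)
    rw [inducedEdges_insert_clique G _ hclique v (fun h => hv (Finset.mem_of_mem_erase h)),
      Finset.card_erase_of_mem huU, hU.2]
    have hchoose : k.choose 2 = (k - 1).choose 2 + (k - 1) := by
      obtain ⟨m, rfl⟩ : ∃ m, k = m + 1 := ⟨k - 1, by omega⟩
      simp [Nat.choose_succ_succ, Nat.choose_one_right, Nat.add_comm]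
    rw [hchoose]
    intro hmod
    have := (Nat.ModEq.add_left_cancel' _ hmod)
    exact hd this
end

section
/- Let k ≥ 4 be even, let G be a graph containing a clique H on k vertices, and let v be a vertex of G outside H that is not adjacent to all vertices of H. Then G contains an induced k-vertex subgraph H̃ with |V(H) ∩ V(H̃)| = k−1 such that e(H̃) ≢ C(k,2) (mod 2). -/
open scoped Classical

/-- `G` is a complete graph. -/
def IsCompleteGraph {V : Type*} (G : SimpleGraph V) : Prop :=
  ∀ u v : V, u ≠ v → G.Adj u v

/-- `G` is the disjoint union of two complete graphs. -/
def IsTwoCliques {V : Type*} (G : SimpleGraph V) : Prop :=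
  ∃ A : Set V, (∀ u ∈ A, ∀ v ∈ A, u ≠ v → G.Adj u v) ∧
    (∀ u ∉ A, ∀ v ∉ A, u ≠ v → G.Adj u v) ∧
    (∀ u ∈ A, ∀ v ∉ A, ¬ G.Adj u v)

/-- `G` is a complete bipartite graph. -/
def IsCompleteBipartite {V : Type*} (G : SimpleGraph V) : Prop :=
  ∃ A : Set V, (∀ u ∈ A, ∀ v ∈ A, ¬ G.Adj u v) ∧
    (∀ u ∉ A, ∀ v ∉ A, ¬ G.Adj u v) ∧
    (∀ u ∈ A, ∀ v ∉ A, G.Adj u v)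

open Finset in
lemma sym2_filter_isDiag_card {α : Type*} [DecidableEq α] (s : Finset α) :
    (s.sym2.filter Sym2.IsDiag).card = s.card := by
  have h : s.sym2.filter Sym2.IsDiag = s.image Sym2.diag := by
    ext e
    induction e with
    | _ a b =>
      simp only [mem_filter, Finset.mk_mem_sym2_iff, Sym2.mk_isDiag_iff, mem_image]
      constructor
      · rintro ⟨⟨ha, hb⟩, rfl⟩; exact ⟨a, ha, rfl⟩
      · rintro ⟨x, hx, hxe⟩
        have : x = a ∧ x = b := by
          rw [Sym2.diag, Sym2.eq_iff] at hxe; tauto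
        obtain ⟨rfl, rfl⟩ := this
        exact ⟨⟨hx, hx⟩, rfl⟩
  rw [h, card_image_of_injective _ Sym2.diag_injective]

open Finset in
lemma sym2_filter_not_isDiag_card {α : Type*} [DecidableEq α] (s : Finset α) :
    (s.sym2.filter (fun e => ¬ e.IsDiag)).card = s.card.choose 2 := by
  have h1 := Finset.card_filter_add_card_filter_not
    (s := s.sym2) (p := Sym2.IsDiag)
  rw [sym2_filter_isDiag_card, Finset.card_sym2] at h1
  have h2 : (s.card + 1).choose 2 = s.card.choose 2 + s.card := by
    rw [Nat.choose_succ_succ]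
    simp [Nat.choose_one_right, Nat.add_comm]
  omega

open Finset in
lemma inducedEdges_clique_insert {V : Type*} [Fintype V] [DecidableEq V] (G : SimpleGraph V)
    {s : Finset V} (hs : G.IsClique s) {v : V} (hv : v ∉ s) :
    inducedEdges G (insert v s) = s.card.choose 2 + (s.filter (fun x => G.Adj v x)).card := by
  set F1 : Finset (Sym2 V) := s.sym2.filter (fun e => ¬ e.IsDiag) with hF1
  set F2 : Finset (Sym2 V) := (s.filter (fun x => G.Adj v x)).image (fun x => s(v, x)) with hF2
  have hset : {e : Sym2 V | e ∈ G.edgeSet ∧ ∀ x ∈ e, x ∈ insert v s} = ↑(F1 ∪ F2) := by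
    ext e
    induction e with
    | _ a b =>
      simp only [Set.mem_setOf_eq, SimpleGraph.mem_edgeSet, Sym2.mem_iff, Finset.coe_union,
        Set.mem_union, hF1, hF2, Finset.coe_filter, Finset.coe_image, Set.mem_setOf_eq,
        Set.mem_image, Finset.mk_mem_sym2_iff, Sym2.mk_isDiag_iff, Finset.mem_coe,
        Finset.mem_filter, Finset.mem_insert]
      constructor
      · rintro ⟨hab, hmem⟩
        have hne : a ≠ b := hab.ne
        have ha := hmem a (Or.inl rfl)
        have hb := hmem b (Or.inr rfl)
        rcases ha with rfl | ha
        · right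
          refine ⟨b, ⟨?_, hab⟩, rfl⟩
          rcases hb with rfl | hb
          · exact absurd rfl hne
          · exact hb
        · rcases hb with rfl | hb
          · right
            refine ⟨a, ⟨ha, hab.symm⟩, Sym2.eq_swap⟩
          · exact Or.inl ⟨⟨ha, hb⟩, hne⟩
      · rintro (⟨⟨ha, hb⟩, hne⟩ | ⟨x, ⟨hx, hadj⟩, hxe⟩)
        · exact ⟨hs ha hb hne, by rintro y (rfl | rfl) <;> simp [ha, hb]⟩
        · rw [Sym2.eq_iff] at hxe
          rcases hxe with ⟨rfl, rfl⟩ | ⟨rfl, rfl⟩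
          · exact ⟨hadj, by rintro y (rfl | rfl) <;> simp [hx]⟩
          · exact ⟨hadj.symm, by rintro y (rfl | rfl) <;> simp [hx]⟩
  have hcard : inducedEdges G (insert v s) = (F1 ∪ F2).card := by
    rw [inducedEdges]
    rw [show {e : Sym2 V // e ∈ G.edgeSet ∧ ∀ x ∈ e, x ∈ insert v s} =
      {e : Sym2 V // e ∈ {e : Sym2 V | e ∈ G.edgeSet ∧ ∀ x ∈ e, x ∈ insert v s}} from rfl]
    rw [Nat.card_coe_set_eq, hset, Set.ncard_coe_finset]
  rw [hcard, Finset.card_union_of_disjoint]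
  · congr 1
    · exact sym2_filter_not_isDiag_card s
    · rw [Finset.card_image_of_injOn]
      intro x _ y _ hxy
      exact Sym2.congr_right.mp hxy
  · rw [Finset.disjoint_left]
    rintro e he1 he2
    simp only [hF1, Finset.mem_filter, Finset.mem_sym2_iff] at he1
    simp only [hF2, Finset.mem_image, Finset.mem_filter] at he2
    obtain ⟨x, _, rfl⟩ := he2
    exact hv (he1.1 v (by simp))

open Finset in
lemma stmt_1_aux {V : Type*} [Fintype V] [DecidableEq V] (G : SimpleGraph V) {k : ℕ}
    (hk : 4 ≤ k) (hke : Even k) {U : Finset V} (hU : G.IsNClique k U) {v : V} (hv : v ∉ U)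
    {w : V} (hw : w ∈ U)
    (hpar : Even (((U.erase w).filter (fun x => G.Adj v x)).card) ) :
    ∃ W : Finset V, W.card = k ∧ (W ∩ U).card = k - 1 ∧
      ¬ (inducedEdges G W ≡ k.choose 2 [MOD 2]) := by
  set s : Finset V := U.erase w with hs
  have hsU : s ⊆ U := Finset.erase_subset _ _
  have hvs : v ∉ s := fun h => hv (hsU h)
  have hscard : s.card = k - 1 := by rw [hs, Finset.card_erase_of_mem hw, hU.card_eq]
  have hclique : G.IsClique s := hU.isClique.subset hsU
  refine ⟨insert v s, ?_, ?_, ?_⟩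
  · rw [Finset.card_insert_of_notMem hvs, hscard]; omega
  · have : insert v s ∩ U = s := by
      ext x
      simp only [Finset.mem_inter, Finset.mem_insert]
      constructor
      · rintro ⟨rfl | hx, hxU⟩
        · exact absurd hxU hv
        · exact hx
      · exact fun hx => ⟨Or.inr hx, hsU hx⟩
    rw [this, hscard]
  · rw [inducedEdges_clique_insert G hclique hvs, hscard]
    have h1 : k.choose 2 = (k - 1).choose 2 + (k - 1) := by
      obtain ⟨m, hm⟩ : ∃ m, k = m + 1 := ⟨k - 1, by omega⟩
      subst hm
      simp [Nat.choose_succ_succ, Nat.choose_one_right, Nat.add_comm]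
    rw [Nat.even_iff] at hpar hke
    intro hmod
    rw [Nat.ModEq, h1] at hmod
    omega

theorem stmt_1 {V : Type*} [Fintype V] [DecidableEq V] (G : SimpleGraph V) (k : ℕ)
    (hk : 4 ≤ k) (hke : Even k) (U : Finset V) (hU : G.IsNClique k U) (v : V) (hv : v ∉ U)
    (hnnb : ∃ u ∈ U, ¬ G.Adj v u) :
    ∃ W : Finset V, W.card = k ∧ (W ∩ U).card = k - 1 ∧
      ¬ (inducedEdges G W ≡ k.choose 2 [MOD 2]) := by
  obtain ⟨u, hu, hadj⟩ := hnnb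
  set N : Finset V := U.filter (fun x => G.Adj v x) with hN
  by_cases hpar : Even N.card
  · refine stmt_1_aux G hk hke hU hv hu ?_
    have heq : (U.erase u).filter (fun x => G.Adj v x) = N := by
      ext x
      simp only [hN, Finset.mem_filter, Finset.mem_erase]
      constructor
      · rintro ⟨⟨_, hxU⟩, hx⟩; exact ⟨hxU, hx⟩
      · rintro ⟨hxU, hx⟩
        refine ⟨⟨?_, hxU⟩, hx⟩
        rintro rfl; exact hadj hx
    rwa [heq]
  · have hNne : N.Nonempty := by
      rw [Finset.nonempty_iff_ne_empty]
      intro h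
      exact hpar (h ▸ by simp)
    obtain ⟨w, hwN⟩ := hNne
    have hwU : w ∈ U := (Finset.mem_filter.mp hwN).1
    refine stmt_1_aux G hk hke hU hv hwU ?_
    have heq : (U.erase w).filter (fun x => G.Adj v x) = N.erase w := by
      rw [hN, Finset.filter_erase]
    rw [heq, Finset.card_erase_of_mem hwN]
    rw [Nat.even_iff] at *
    have : N.card ≠ 0 := by
      intro h
      exact Finset.notMem_empty w (Finset.card_eq_zero.mp h ▸ hwN)
    omega
end

section
/- Let k ≥ 2 and let G be a graph on n ≥ 2^{2k} vertices. Then G contains no induced k-vertex subgraph with an even number of edges if and only if C(k,2) is odd and either (1) G is a complete graph, or (2) k ≡ 3 (mod 4) and G is the disjoint union of two complete graphs. -/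
open scoped Classical

namespace StmtAux

open Finset

variable {V : Type*} [Fintype V] [DecidableEq V] (G : SimpleGraph V)

/-- Finset of edges induced by `U`. -/
noncomputable def EF (U : Finset V) : Finset (Sym2 V) :=
  G.edgeFinset.filter (fun e => ∀ v ∈ e, v ∈ U)

lemma inducedEdges_eq (U : Finset V) : inducedEdges G U = (EF G U).card := by
  rw [inducedEdges, Nat.card_eq_fintype_card, Fintype.card_subtype, EF]
  congr 1
  ext e
  simp [SimpleGraph.mem_edgeFinset]

lemma EF_insert {S : Finset V} {x : V} (hx : x ∉ S) :
    EF G (insert x S) = EF G S ∪ (S.filter (G.Adj x)).image (fun y => s(x,y)) := by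
  ext e
  induction e with
  | _ a b =>
    simp only [EF, mem_filter, SimpleGraph.mem_edgeFinset, SimpleGraph.mem_edgeSet,
      Sym2.mem_iff, mem_union, mem_image, mem_insert, Sym2.eq, Sym2.rel_iff', Prod.mk.injEq,
      Prod.swap_prod_mk]
    constructor
    · rintro ⟨hab, h⟩
      have ha := h a (Or.inl rfl)
      have hb := h b (Or.inr rfl)
      rcases ha with rfl | ha
      · rcases hb with rfl | hb
        · exact absurd hab (G.irrefl)
        · exact Or.inr ⟨b, ⟨hb, hab⟩, Or.inl ⟨rfl, rfl⟩⟩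
      · rcases hb with rfl | hb
        · exact Or.inr ⟨a, ⟨ha, hab.symm⟩, Or.inr ⟨rfl, rfl⟩⟩
        · exact Or.inl ⟨hab, by rintro v (rfl | rfl) <;> assumption⟩
    · rintro (⟨hab, h⟩ | ⟨y, ⟨hy, hadj⟩, (⟨rfl, rfl⟩ | ⟨rfl, rfl⟩)⟩)
      · exact ⟨hab, by rintro v (rfl | rfl) <;> exact Or.inr (h _ (by simp))⟩
      · exact ⟨hadj, by rintro v (rfl | rfl); exacts [Or.inl rfl, Or.inr hy]⟩
      · exact ⟨hadj.symm, by rintro v (rfl | rfl); exacts [Or.inr hy, Or.inl rfl]⟩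

lemma EF_insert_card {S : Finset V} {x : V} (hx : x ∉ S) :
    (EF G (insert x S)).card = (EF G S).card + (S.filter (G.Adj x)).card := by
  rw [EF_insert G hx, card_union_of_disjoint, card_image_of_injOn]
  · intro y hy z hz h
    simp only [Sym2.eq, Sym2.rel_iff', Prod.mk.injEq, Prod.swap_prod_mk] at h
    rcases h with ⟨-, rfl⟩ | ⟨rfl, rfl⟩
    · rfl
    · exact absurd (mem_filter.1 hy).1 hx
  · rw [disjoint_left]
    rintro e he hm
    simp only [mem_image, mem_filter] at hm
    obtain ⟨y, hy, rfl⟩ := hm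
    have := (mem_filter.1 he).2 x (by simp)
    exact hx this

lemma EF_clique {W : Finset V} (h : ∀ u ∈ W, ∀ v ∈ W, u ≠ v → G.Adj u v) :
    (EF G W).card = W.card.choose 2 := by
  induction W using Finset.induction_on with
  | empty =>
    have he : EF G ∅ = ∅ := by
      rw [eq_empty_iff_forall_notMem]
      intro e hee
      induction e with
      | _ a b => exact absurd ((mem_filter.1 hee).2 a (by simp)) (notMem_empty a)
    simp [he]
  | @insert x s hx ih =>
    rw [EF_insert_card G hx, card_insert_of_notMem hx]
    have hfs : s.filter (G.Adj x) = s := by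
      apply filter_true_of_mem
      intro v hv
      exact h x (mem_insert_self x s) v (mem_insert_of_mem hv) (fun he => hx (he ▸ hv))
    rw [hfs, ih (fun u hu v hv => h u (mem_insert_of_mem hu) v (mem_insert_of_mem hv))]
    rw [Nat.choose_two_right, Nat.choose_two_right, Nat.triangle_succ]

lemma EF_indep {W : Finset V} (h : ∀ u ∈ W, ∀ v ∈ W, ¬ G.Adj u v) :
    (EF G W).card = 0 := by
  rw [card_eq_zero, eq_empty_iff_forall_notMem]
  intro e he
  induction e with
  | _ a b =>
    simp only [EF, mem_filter, SimpleGraph.mem_edgeFinset, SimpleGraph.mem_edgeSet] at he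
    exact h a (he.2 a (by simp)) b (he.2 b (by simp)) he.1

lemma EF_split {W : Finset V} {A : Set V}
    (h : ∀ u ∈ A, ∀ v ∉ A, ¬ G.Adj u v) :
    (EF G W).card = (EF G (W.filter (· ∈ A))).card + (EF G (W.filter (· ∉ A))).card := by
  rw [← card_union_of_disjoint]
  · congr 1
    ext e
    induction e with
    | _ a b =>
      simp only [EF, mem_filter, SimpleGraph.mem_edgeFinset, SimpleGraph.mem_edgeSet, mem_union]
      constructor
      · rintro ⟨hab, hm⟩
        have ha := hm a (by simp); have hb := hm b (by simp)
        by_cases haA : a ∈ A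
        · by_cases hbA : b ∈ A
          · exact Or.inl ⟨hab, by rintro v hv; rcases Sym2.mem_iff.1 hv with rfl | rfl <;>
              simp [mem_filter, ha, hb, haA, hbA]⟩
          · exact absurd hab (h a haA b hbA)
        · by_cases hbA : b ∈ A
          · exact absurd hab.symm (h b hbA a haA)
          · exact Or.inr ⟨hab, by rintro v hv; rcases Sym2.mem_iff.1 hv with rfl | rfl <;>
              simp [mem_filter, ha, hb, haA, hbA]⟩
      · rintro (⟨hab, hm⟩ | ⟨hab, hm⟩) <;>
          exact ⟨hab, fun v hv => (hm v hv).1⟩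
  · rw [disjoint_left]
    rintro e he he'
    induction e with
    | _ a b =>
      have h1 := (mem_filter.1 he).2 a (by simp)
      have h2 := (mem_filter.1 he').2 a (by simp)
      exact (mem_filter.1 h2).2 (mem_filter.1 h1).2

lemma choose2_parity (k : ℕ) : Odd (k.choose 2) ↔ (k % 4 = 2 ∨ k % 4 = 3) := by
  induction k using Nat.strong_induction_on with
  | _ k ih =>
    match k, ih with
    | 0, _ => decide
    | 1, _ => decide
    | 2, _ => decide
    | 3, _ => decide
    | (m+4), ih =>
      have key : (m+4).choose 2 = m.choose 2 + (4*m + 6) := by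
        rw [Nat.choose_two_right, Nat.choose_two_right]
        have h2 : 2 ∣ m * (m-1) := by
          cases m with
          | zero => simp
          | succ n => simpa [Nat.mul_comm] using (Nat.even_mul_succ_self n).two_dvd
        have hm : (m+4) * (m+4-1) = m * (m-1) + (8*m + 12) := by
          cases m with
          | zero => rfl
          | succ n => simp only [Nat.succ_sub_one]; ring
        omega
      rw [key, Nat.odd_add]
      have heven : Even (4*m+6) := ⟨2*m+3, by ring⟩
      rw [ih m (by omega)]
      constructor
      · rintro h; rcases h.2 heven with h' | h' <;> omega
      · intro h
        refine ⟨fun _ => heven, fun _ => ?_⟩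
        omega

/-- 0-1 adjacency indicator. -/
noncomputable def eps (x y : V) : ℕ := if G.Adj x y then 1 else 0

lemma eps_comm (x y : V) : eps G x y = eps G y x := by
  simp [eps, SimpleGraph.adj_comm]

lemma eps_le_one (x y : V) : eps G x y ≤ 1 := by
  unfold eps; split_ifs <;> omega

/-- Triangle indicator sum. -/
noncomputable def tsum (x y z : V) : ℕ := eps G x y + eps G x z + eps G y z

lemma tsum_231 (x y z : V) : tsum G x y z = tsum G y z x := by
  unfold tsum
  rw [eps_comm G y x, eps_comm G z x]
  ring

lemma tsum_132 (x y z : V) : tsum G x y z = tsum G x z y := by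
  unfold tsum
  rw [eps_comm G z y]
  ring

lemma fresh {s : Finset V} (hs : s.card < Fintype.card V) : ∃ p, p ∉ s := by
  have h : (univ \ s).Nonempty := by
    rw [← card_pos, card_sdiff_of_subset (subset_univ s), card_univ]
    omega
  obtain ⟨p, hp⟩ := h
  exact ⟨p, (mem_sdiff.1 hp).2⟩

section Forward

variable {G} {k : ℕ}

variable (hk : 2 ≤ k) (hn : 2 ^ (2 * k) ≤ Fintype.card V)
  (Hodd : ∀ W : Finset V, W.card = k → Odd (EF G W).card)

include hk hn

omit hk hn in
lemma card_big (k : ℕ) (hk : 2 ≤ k) (hn : 2 ^ (2 * k) ≤ Fintype.card V) :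
    4 * k ≤ Fintype.card V ∧ 16 ≤ Fintype.card V := by
  have h1 : k < 2 ^ k := Nat.lt_two_pow_self
  have h2 : 4 ≤ 2 ^ k := by
    calc 4 = 2 ^ 2 := rfl
    _ ≤ 2 ^ k := Nat.pow_le_pow_right (by norm_num) hk
  have h3 : 2 ^ (2 * k) = 2 ^ k * 2 ^ k := by rw [two_mul, pow_add]
  constructor
  · have : 4 * k ≤ 2 ^ k * 2 ^ k := Nat.mul_le_mul h2 h1.le
    omega
  · have : 2 ^ 4 ≤ 2 ^ (2 * k) := Nat.pow_le_pow_right (by norm_num) (by omega)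
    omega

include Hodd

lemma stepA : ∀ S : Finset V, S.card = k - 1 → ∀ x, x ∉ S → ∀ y, y ∉ S →
    (S.filter (G.Adj x)).card % 2 = (S.filter (G.Adj y)).card % 2 := by
  intro S hS x hx y hy
  have h1 := Hodd (insert x S) (by rw [card_insert_of_notMem hx]; omega)
  have h2 := Hodd (insert y S) (by rw [card_insert_of_notMem hy]; omega)
  rw [EF_insert_card G hx, Nat.odd_iff] at h1
  rw [EF_insert_card G hy, Nat.odd_iff] at h2
  omega

omit hk hn Hodd in
lemma filter_insert_card (T : Finset V) (x z : V) (hz : z ∉ T) :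
    ((insert z T).filter (G.Adj x)).card = (T.filter (G.Adj x)).card + eps G x z := by
  rw [filter_insert]
  unfold eps
  by_cases h : G.Adj x z
  · rw [if_pos h, if_pos h, card_insert_of_notMem (fun hc => hz (mem_filter.1 hc).1)]
  · rw [if_neg h, if_neg h]
    omega

lemma hstar : ∀ x y z w : V, x ≠ z → x ≠ w → y ≠ z → y ≠ w →
    (eps G x z + eps G y z) % 2 = (eps G x w + eps G y w) % 2 := by
  intro x y z w hxz hxw hyz hyw
  have hbig := card_big (V := V) k hk hn
  have hcard4 : ({x, y, z, w} : Finset V).card ≤ 4 := by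
    refine le_trans (card_insert_le _ _) ?_
    refine Nat.succ_le_succ (le_trans (card_insert_le _ _) ?_)
    refine Nat.succ_le_succ (le_trans (card_insert_le _ _) ?_)
    simp
  obtain ⟨T, hTsub, hTcard⟩ := exists_subset_card_eq (s := univ \ {x, y, z, w}) (n := k - 2) (by
    rw [card_sdiff_of_subset (subset_univ _), card_univ]
    omega)
  have hmem : ∀ v : V, v ∈ ({x, y, z, w} : Finset V) → v ∉ T := by
    intro v hv hvT
    exact (mem_sdiff.1 (hTsub hvT)).2 hv
  have hxT : x ∉ T := hmem x (by simp)
  have hyT : y ∉ T := hmem y (by simp)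
  have hzT : z ∉ T := hmem z (by simp)
  have hwT : w ∉ T := hmem w (by simp)
  have h1 := stepA hk hn Hodd (insert z T) (by rw [card_insert_of_notMem hzT]; omega)
    x (by simp [hxz, hxT]) y (by simp [hyz, hyT])
  have h2 := stepA hk hn Hodd (insert w T) (by rw [card_insert_of_notMem hwT]; omega)
    x (by simp [hxw, hxT]) y (by simp [hyw, hyT])
  rw [filter_insert_card T x z hzT, filter_insert_card T y z hzT] at h1
  rw [filter_insert_card T x w hwT, filter_insert_card T y w hwT] at h2
  omega

lemma tchange : ∀ x y z w : V, x ≠ z → x ≠ w → y ≠ z → y ≠ w →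
    tsum G x y z % 2 = tsum G x y w % 2 := by
  intro x y z w hxz hxw hyz hyw
  have := hstar hk hn Hodd x y z w hxz hxw hyz hyw
  unfold tsum
  omega

lemma tri_const : ∀ a b c d e f : V, a ≠ b → a ≠ c → b ≠ c → d ≠ e → d ≠ f → e ≠ f →
    tsum G a b c % 2 = tsum G d e f % 2 := by
  intro a b c d e f hab hac hbc hde hdf hef
  have hbig := card_big (V := V) k hk hn
  have hc8 : ∀ s : Finset V, s.card ≤ 8 → ∃ p, p ∉ s := fun s hs => fresh (by omega)
  have hins : ∀ (u : V) (s : Finset V) (m : ℕ), s.card ≤ m → (insert u s).card ≤ m + 1 :=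
    fun u s m h => le_trans (card_insert_le _ _) (Nat.succ_le_succ h)
  obtain ⟨p, hp⟩ := hc8 {a, b, c, d, e, f}
    ((hins _ _ 5 (hins _ _ 4 (hins _ _ 3 (hins _ _ 2 (hins _ _ 1 (by simp)))))).trans (by omega))
  obtain ⟨q, hq⟩ := hc8 {a, b, c, d, e, f, p}
    ((hins _ _ 6 (hins _ _ 5 (hins _ _ 4 (hins _ _ 3 (hins _ _ 2 (hins _ _ 1 (by simp))))))).trans (by omega))
  obtain ⟨r, hr⟩ := hc8 {a, b, c, d, e, f, p, q}
    (hins _ _ 7 (hins _ _ 6 (hins _ _ 5 (hins _ _ 4 (hins _ _ 3 (hins _ _ 2 (hins _ _ 1 (by simp))))))))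
  simp only [mem_insert, mem_singleton, not_or] at hp hq hr
  obtain ⟨hpa, hpb, hpc, hpd, hpe, hpf⟩ := hp
  obtain ⟨hqa, hqb, hqc, hqd, hqe, hqf, hqp⟩ := hq
  obtain ⟨hra, hrb, hrc, hrd, hre, hrf, hrp, hrq⟩ := hr
  have tc := tchange hk hn Hodd
  have h1 := tc a b c p hac (Ne.symm hpa) hbc (Ne.symm hpb)
  have h2 := tc a p b q hab (Ne.symm hqa) hpb (Ne.symm hqp)
  have h3 := tc p q a r hpa (Ne.symm hrp) hqa (Ne.symm hrq)
  have h4 := tc p q r d (Ne.symm hrp) hpd (Ne.symm hrq) hqd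
  have h5 := tc p d q e (Ne.symm hqp) hpe (Ne.symm hqd) hde
  have h6 := tc d e p f (Ne.symm hpd) hdf (Ne.symm hpe) hef
  have l1 := tsum_132 G a b p
  have l2 := tsum_231 G a p q
  have l3 := tsum_132 G p q d
  have l4 := tsum_231 G p d e
  omega

end Forward

end StmtAux

open Finset StmtAux in
theorem stmt_4 {V : Type*} [Fintype V] [DecidableEq V] (G : SimpleGraph V) (k : ℕ)
    (hk : 2 ≤ k) (hn : 2 ^ (2 * k) ≤ Fintype.card V) :
    (∀ W : Finset V, W.card = k → ¬ Even (inducedEdges G W)) ↔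
      (Odd (k.choose 2) ∧
        (IsCompleteGraph G ∨ (k % 4 = 3 ∧ IsTwoCliques G))) := by
  constructor
  · intro H
    have Hodd : ∀ W : Finset V, W.card = k → Odd (EF G W).card := by
      intro W hW
      have := H W hW
      rw [inducedEdges_eq G W] at this
      exact Nat.not_even_iff_odd.1 this
    obtain ⟨h4k, h16⟩ := card_big (V := V) k hk hn
    obtain ⟨o, _⟩ := fresh (s := (∅ : Finset V)) (by simp; omega)
    obtain ⟨o2, ho2⟩ := fresh (s := ({o} : Finset V)) (by simp; omega)
    obtain ⟨o3, ho3⟩ := fresh (s := ({o, o2} : Finset V)) (by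
      refine lt_of_le_of_lt (le_trans (card_insert_le _ _) ?_) (by omega : 2 < Fintype.card V)
      simp)
    simp only [mem_insert, mem_singleton, not_or] at ho2 ho3
    have hoo2 : o ≠ o2 := Ne.symm ho2
    have hoo3 : o ≠ o3 := Ne.symm ho3.1
    have ho2o3 : o2 ≠ o3 := Ne.symm ho3.2
    have tri : ∀ x y z : V, x ≠ y → x ≠ z → y ≠ z →
        tsum G x y z % 2 = tsum G o o2 o3 % 2 := fun x y z hxy hxz hyz =>
      tri_const hk hn Hodd x y z o o2 o3 hxy hxz hyz hoo2 hoo3 ho2o3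
    have noindep : ∀ s : Finset V, (∀ u ∈ s, ∀ v ∈ s, ¬ G.Adj u v) → s.card < k := by
      intro s hs
      by_contra hcon
      push_neg at hcon
      obtain ⟨W, hWs, hWc⟩ := exists_subset_card_eq (s := s) (n := k) hcon
      have := Hodd W hWc
      rw [EF_indep G (fun u hu v hv => hs u (hWs hu) v (hWs hv))] at this
      simp at this
    have hc01 : tsum G o o2 o3 % 2 = 0 ∨ tsum G o o2 o3 % 2 = 1 := by omega
    rcases hc01 with hc | hc
    · -- complete-bipartite-like case: contradiction
      exfalso
      set AF : Finset V := univ.filter (fun x => x = o ∨ ¬ G.Adj o x) with hAF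
      set BF : Finset V := univ.filter (fun x => ¬ (x = o ∨ ¬ G.Adj o x)) with hBF
      have hAind : ∀ u ∈ AF, ∀ v ∈ AF, ¬ G.Adj u v := by
        intro u hu v hv hadj
        rw [hAF, mem_filter] at hu hv
        have hu' := hu.2; have hv' := hv.2
        by_cases hu0 : u = o
        · subst hu0
          rcases hv' with rfl | hv'
          · exact G.loopless.irrefl _ hadj
          · exact hv' hadj
        · by_cases hv0 : v = o
          · subst hv0
            rcases hu' with rfl | hu'
            · exact G.loopless.irrefl _ hadj
            · exact hu' hadj.symm
          · have huv : u ≠ v := fun h => G.loopless.irrefl u (h ▸ hadj)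
            have hou : ¬ G.Adj o u := hu'.resolve_left hu0
            have hov : ¬ G.Adj o v := hv'.resolve_left hv0
            have ht := tri o u v (Ne.symm hu0) (Ne.symm hv0) huv
            rw [hc] at ht
            unfold StmtAux.tsum StmtAux.eps at ht
            rw [if_neg hou, if_neg hov, if_pos hadj] at ht
            norm_num at ht
      have hBind : ∀ u ∈ BF, ∀ v ∈ BF, ¬ G.Adj u v := by
        intro u hu v hv hadj
        rw [hBF, mem_filter] at hu hv
        push_neg at hu hv
        obtain ⟨hu0, hou⟩ := hu.2
        obtain ⟨hv0, hov⟩ := hv.2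
        have huv : u ≠ v := fun h => G.loopless.irrefl u (h ▸ hadj)
        have ht := tri o u v (Ne.symm hu0) (Ne.symm hv0) huv
        rw [hc] at ht
        unfold StmtAux.tsum StmtAux.eps at ht
        rw [if_pos hou, if_pos hov, if_pos hadj] at ht
        norm_num at ht
      have hA := noindep AF hAind
      have hB := noindep BF hBind
      have hsum : AF.card + BF.card = Fintype.card V := by
        rw [hAF, hBF, card_filter_add_card_filter_not, card_univ]
      omega
    · -- two-cliques case
      have h1 : ∀ u ∈ ({x | x = o ∨ G.Adj o x} : Set V), ∀ v ∈ ({x | x = o ∨ G.Adj o x} : Set V),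
          u ≠ v → G.Adj u v := by
        intro u hu v hv huv
        simp only [Set.mem_setOf_eq] at hu hv
        by_cases hu0 : u = o
        · subst hu0
          rcases hv with rfl | hv
          · exact absurd rfl huv
          · exact hv
        · by_cases hv0 : v = o
          · subst hv0
            exact (hu.resolve_left hu0).symm
          · have hou : G.Adj o u := hu.resolve_left hu0
            have hov : G.Adj o v := hv.resolve_left hv0
            have ht := tri o u v (Ne.symm hu0) (Ne.symm hv0) huv
            rw [hc] at ht
            unfold StmtAux.tsum StmtAux.eps at ht
            rw [if_pos hou, if_pos hov] at ht
            by_contra hadj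
            rw [if_neg hadj] at ht
            norm_num at ht
      have h2 : ∀ u ∉ ({x | x = o ∨ G.Adj o x} : Set V), ∀ v ∉ ({x | x = o ∨ G.Adj o x} : Set V),
          u ≠ v → G.Adj u v := by
        intro u hu v hv huv
        simp only [Set.mem_setOf_eq, not_or] at hu hv
        obtain ⟨hu0, hou⟩ := hu
        obtain ⟨hv0, hov⟩ := hv
        have ht := tri o u v (Ne.symm hu0) (Ne.symm hv0) huv
        rw [hc] at ht
        unfold StmtAux.tsum StmtAux.eps at ht
        rw [if_neg hou, if_neg hov] at ht
        by_contra hadj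
        rw [if_neg hadj] at ht
        norm_num at ht
      have h3 : ∀ u ∈ ({x | x = o ∨ G.Adj o x} : Set V), ∀ v ∉ ({x | x = o ∨ G.Adj o x} : Set V),
          ¬ G.Adj u v := by
        intro u hu v hv hadj
        simp only [Set.mem_setOf_eq, not_or] at hu hv
        obtain ⟨hv0, hov⟩ := hv
        by_cases hu0 : u = o
        · subst hu0; exact hov hadj
        · have hou : G.Adj o u := hu.resolve_left hu0
          have huv : u ≠ v := fun h => hov (h ▸ hou)
          have ht := tri o u v (Ne.symm hu0) (Ne.symm hv0) huv
          rw [hc] at ht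
          unfold StmtAux.tsum StmtAux.eps at ht
          rw [if_pos hou, if_neg hov, if_pos hadj] at ht
          norm_num at ht
      set A : Set V := {x | x = o ∨ G.Adj o x} with hA
      set AF : Finset V := univ.filter (fun x => x ∈ A) with hAF
      set BF : Finset V := univ \ AF with hBF
      have hmemB : ∀ v : V, v ∈ BF ↔ v ∉ A := by
        intro v
        rw [hBF, mem_sdiff, hAF, mem_filter]
        simp
      have hmemA : ∀ v : V, v ∈ AF ↔ v ∈ A := by
        intro v
        rw [hAF, mem_filter]
        simp
      have hdisj : Disjoint AF BF := disjoint_sdiff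
      have hsum : AF.card + BF.card = Fintype.card V := by
        have h1' := card_le_card (subset_univ AF)
        rw [hBF, card_sdiff_of_subset (subset_univ _), card_univ]
        rw [card_univ] at h1'
        omega
      have key : ∀ P Q : Finset V, (∀ u ∈ P, ∀ v ∈ P, u ≠ v → G.Adj u v) →
          (∀ u ∈ P, ∀ v ∈ Q, ¬ G.Adj u v) → Disjoint P Q → k ≤ P.card → Q.Nonempty →
          Odd (k.choose 2) ∧ Odd ((k-1).choose 2) := by
        rintro P Q hP hPQ hdis hPk ⟨b, hb⟩
        obtain ⟨W1, hW1P, hW1c⟩ := exists_subset_card_eq (s := P) (n := k) hPk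
        have o1 := Hodd W1 hW1c
        rw [EF_clique G (fun u hu v hv huv => hP u (hW1P hu) v (hW1P hv) huv), hW1c] at o1
        obtain ⟨W2, hW2P, hW2c⟩ := exists_subset_card_eq (s := P) (n := k-1) (by omega)
        have hbW2 : b ∉ W2 := fun hbw => (disjoint_left.1 hdis (hW2P hbw)) hb
        have o2' := Hodd (insert b W2) (by rw [card_insert_of_notMem hbW2, hW2c]; omega)
        rw [EF_insert_card G hbW2] at o2'
        have hfe : W2.filter (G.Adj b) = ∅ := by
          rw [filter_eq_empty_iff]
          intro u hu
          exact fun hadj => hPQ u (hW2P hu) b hb hadj.symm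
        rw [hfe, EF_clique G (fun u hu v hv huv => hP u (hW2P hu) v (hW2P hv) huv), hW2c] at o2'
        simp only [card_empty, Nat.add_zero] at o2'
        exact ⟨o1, o2'⟩
      by_cases hBe : BF = ∅
      · have hall : ∀ w : V, w ∈ A := by
          intro w
          by_contra hw
          exact (eq_empty_iff_forall_notMem.1 hBe w) ((hmemB w).2 hw)
        have hcomp : IsCompleteGraph G := fun u v huv => h1 u (hall u) v (hall v) huv
        have hoddk : Odd (k.choose 2) := by
          obtain ⟨W, _, hWc⟩ := exists_subset_card_eq (s := (univ : Finset V)) (n := k) (by rw [card_univ]; omega)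
          have := Hodd W hWc
          rwa [EF_clique G (fun u _ v _ huv => hcomp u v huv), hWc] at this
        exact ⟨hoddk, Or.inl hcomp⟩
      · obtain ⟨b0, hb0⟩ := nonempty_iff_ne_empty.2 hBe
        have hout : Odd (k.choose 2) ∧ Odd ((k-1).choose 2) := by
          by_cases hAk : k ≤ AF.card
          · refine key AF BF ?_ ?_ hdisj hAk ⟨b0, hb0⟩
            · exact fun u hu v hv huv => h1 u ((hmemA u).1 hu) v ((hmemA v).1 hv) huv
            · exact fun u hu v hv => h3 u ((hmemA u).1 hu) v ((hmemB v).1 hv)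
          · have hBk : k ≤ BF.card := by omega
            have hoAF : o ∈ AF := (hmemA o).2 (Or.inl rfl)
            refine key BF AF ?_ ?_ hdisj.symm hBk ⟨o, hoAF⟩
            · exact fun u hu v hv huv => h2 u ((hmemB u).1 hu) v ((hmemB v).1 hv) huv
            · exact fun u hu v hv hadj =>
                h3 v ((hmemA v).1 hv) u ((hmemB u).1 hu) hadj.symm
        have hk4 : k % 4 = 3 := by
          have p1 := (choose2_parity k).1 hout.1
          have p2 := (choose2_parity (k-1)).1 hout.2
          omega
        exact ⟨hout.1, Or.inr ⟨hk4, ⟨A, h1, h2, h3⟩⟩⟩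
  · rintro ⟨hodd, hcase⟩ W hW
    rw [inducedEdges_eq G W, Nat.not_even_iff_odd]
    rcases hcase with hcomp | ⟨hk4, A, h1, h2, h3⟩
    · rw [EF_clique G (fun u _ v _ huv => hcomp u v huv), hW]
      exact hodd
    · rw [EF_split G h3]
      rw [EF_clique G (fun u hu v hv huv => h1 u (mem_filter.1 hu).2 v (mem_filter.1 hv).2 huv)]
      rw [EF_clique G (fun u hu v hv huv => h2 u (mem_filter.1 hu).2 v (mem_filter.1 hv).2 huv)]
      have hgoal : ∀ a b : ℕ, a + b = k → (a.choose 2 + b.choose 2) % 2 = 1 := by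
        intro a b hab'
        have pa := choose2_parity a
        have pb := choose2_parity b
        rw [Nat.odd_iff] at pa pb
        omega
      rw [Nat.odd_iff]
      exact hgoal _ _ (by rw [← hW]; exact card_filter_add_card_filter_not _)
end

section
/- Let k ≥ 2 and let G be a graph on n ≥ 2^{2k} vertices. Then G contains no induced k-vertex subgraph with an odd number of edges if and only if one of the following holds: (1) G is an independent set (has no edges); (2) k is odd and G is a complete bipartite graph; (3) C(k,2) is even and G is a complete graph; (4) k ≡ 1 (mod 4) and G is the disjoint union of two complete graphs. -/
open scoped Classical

open Finset

section Aux

variable {V : Type*} [Fintype V] [DecidableEq V]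

/-- Adjacency indicator with values in `ZMod 2`. -/
noncomputable def adjTwo (G : SimpleGraph V) (x y : V) : ZMod 2 :=
  if G.Adj x y then 1 else 0

lemma adjTwo_symm (G : SimpleGraph V) (x y : V) : adjTwo G x y = adjTwo G y x := by
  simp [adjTwo, SimpleGraph.adj_comm]

lemma adjTwo_eq_one (G : SimpleGraph V) (x y : V) : adjTwo G x y = 1 ↔ G.Adj x y := by
  by_cases h : G.Adj x y <;> simp [adjTwo, h]

lemma natCast_zmod_two_eq_zero_iff (n : ℕ) : ((n : ZMod 2) = 0) ↔ Even n := by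
  rw [ZMod.natCast_eq_zero_iff, Nat.even_iff]
  omega

lemma inducedEdges_eq_card (G : SimpleGraph V) (W : Finset V) :
    inducedEdges G W = (W.sym2.filter (fun e => e ∈ G.edgeSet)).card := by
  rw [inducedEdges, Nat.card_eq_fintype_card, Fintype.card_subtype]
  congr 1
  ext e
  simp [Finset.mem_sym2_iff, and_comm]

lemma inducedEdges_empty (G : SimpleGraph V) : inducedEdges G (∅ : Finset V) = 0 := by
  rw [inducedEdges_eq_card]
  simp [Finset.sym2_empty]

lemma inducedEdges_insert (G : SimpleGraph V) {x : V} {W : Finset V} (hx : x ∉ W) :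
    inducedEdges G (insert x W) =
      inducedEdges G W + (W.filter (fun y => G.Adj x y)).card := by
  rw [inducedEdges_eq_card, inducedEdges_eq_card, Finset.sym2_insert, Finset.filter_union]
  have himg : ((insert x W).image (fun b => s(x, b))).filter (fun e => e ∈ G.edgeSet)
      = (W.filter (fun y => G.Adj x y)).image (fun b => s(x, b)) := by
    rw [Finset.filter_image]
    congr 1
    ext b
    simp only [Finset.mem_filter, Finset.mem_insert, SimpleGraph.mem_edgeSet]
    constructor
    · rintro ⟨rfl | hb, hadj⟩
      · exact absurd hadj (G.irrefl)
      · exact ⟨hb, hadj⟩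
    · rintro ⟨hb, hadj⟩
      exact ⟨Or.inr hb, hadj⟩
  rw [himg]
  rw [Finset.card_union_of_disjoint, Finset.card_image_of_injective _
    (fun b b' h => Sym2.congr_right.mp h)]
  · omega
  · rw [Finset.disjoint_left]
    rintro e he he'
    obtain ⟨b, hb, rfl⟩ := Finset.mem_image.mp he
    have hmem := (Finset.mem_filter.mp he').1
    have : x ∈ W := Finset.mem_sym2_iff.mp hmem x (Sym2.mem_mk_left _ _)
    exact hx this

lemma exists_not_mem_finset (T : Finset V) (h : T.card < Fintype.card V) :
    ∃ z, z ∉ T := by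
  by_contra h'
  push_neg at h'
  have hsub : (Finset.univ : Finset V) ⊆ T := fun z _ => h' z
  have := Finset.card_le_card hsub
  rw [Finset.card_univ] at this
  omega

lemma card_insert_le' (a : V) (s : Finset V) {n : ℕ} (h : s.card ≤ n) :
    (insert a s).card ≤ n + 1 :=
  le_trans (Finset.card_insert_le _ _) (by omega)

/-- parity helper -/
lemma zmod4 : ∀ a b c d e x1 x2 x3 x4 : ZMod 2,
    e + a + b + x1 = 0 → e + c + d + x2 = 0 → e + a + d + x3 = 0 → e + c + b + x4 = 0 →
    x1 + x2 + x3 + x4 = 0 := by decide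

lemma zmod5 : ∀ axy axq ayq azy azq : ZMod 2,
    axy + azq + axq + azy = 0 → axy + axq + ayq = azy + azq + ayq := by decide

lemma zmodc1 : ∀ a c : ZMod 2, a = c + c + a := by decide

lemma zmodc2 : ∀ a u v c : ZMod 2, a + u + v = c → a = c + u + v := by decide

lemma zmod_cases : ∀ a : ZMod 2, a = 0 ∨ a = 1 := by decide

lemma zmod_bip : ∀ u v : ZMod 2, (0 + u + v = 1) ↔ ¬(u = 1 ↔ v = 1) := by decide

lemma zmod_cliq : ∀ u v : ZMod 2, (1 + u + v = 1) ↔ ((u = 0) ↔ (v = 0)) := by decide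

lemma choose_two_succ (m : ℕ) : (m + 1).choose 2 = m.choose 2 + m := by
  rw [Nat.choose_succ_succ, Nat.choose_one_right, Nat.add_comm]

lemma even_choose_two : ∀ n : ℕ, Even (n.choose 2) ↔ (n % 4 = 0 ∨ n % 4 = 1) := by
  intro n
  induction n using Nat.strong_induction_on with
  | _ n ih =>
    match n, ih with
    | 0, _ => simp
    | 1, _ => simp
    | 2, _ => decide
    | 3, _ => decide
    | (m + 4), ih =>
      have h4 : (m + 4).choose 2 = m.choose 2 + (4 * m + 6) := by
        rw [show m + 4 = (m + 3) + 1 from rfl, choose_two_succ,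
          show m + 3 = (m + 2) + 1 from rfl, choose_two_succ,
          show m + 2 = (m + 1) + 1 from rfl, choose_two_succ, choose_two_succ]
        omega
      have hm := ih m (by omega)
      rw [h4, Nat.even_add]
      have heven : Even (4 * m + 6) := ⟨2 * m + 3, by ring⟩
      simp only [heven, iff_true]
      rw [hm]
      omega

lemma two_mul_add_le (k : ℕ) (hk : 2 ≤ k) : 2 * k + 4 ≤ 2 ^ (2 * k) := by
  induction k, hk using Nat.le_induction with
  | base => decide
  | succ n hn ih =>
    have key : 2 ^ (2 * (n + 1)) = 4 * 2 ^ (2 * n) := by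
      rw [show 2 * (n + 1) = 2 * n + 2 from by ring, pow_add]
      ring
    omega

variable (G : SimpleGraph V)

lemma count_bip (p : V → Prop) [DecidablePred p] (h : ∀ x y, G.Adj x y ↔ ¬(p x ↔ p y)) (W : Finset V) :
    inducedEdges G W = (W.filter p).card * (W.filter (fun x => ¬ p x)).card := by
  induction W using Finset.induction_on with
  | empty => simp [inducedEdges_empty]
  | @insert x W hxW ih =>
    rw [inducedEdges_insert G hxW, ih]
    by_cases hp : p x
    · have h1 : W.filter (fun y => G.Adj x y) = W.filter (fun y => ¬ p y) := by
        apply Finset.filter_congr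
        intro y _
        rw [h x y]
        simp [hp]
      rw [h1, Finset.filter_insert, Finset.filter_insert, if_pos hp, if_neg (by simp [hp]),
        Finset.card_insert_of_notMem (by simp [hxW])]
      ring
    · have h1 : W.filter (fun y => G.Adj x y) = W.filter p := by
        apply Finset.filter_congr
        intro y _
        rw [h x y]
        constructor
        · intro hn
          by_contra hpy
          exact hn ⟨fun h' => absurd h' hp, fun h' => absurd h' hpy⟩
        · intro hpy hiff
          exact hp (hiff.mpr hpy)
      rw [h1, Finset.filter_insert, Finset.filter_insert, if_neg hp, if_pos hp,
        Finset.card_insert_of_notMem (by simp [hxW])]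
      ring

lemma count_cliq (p : V → Prop) [DecidablePred p] (h : ∀ x y, G.Adj x y ↔ (x ≠ y ∧ (p x ↔ p y)))
    (W : Finset V) :
    inducedEdges G W =
      (W.filter p).card.choose 2 + (W.filter (fun x => ¬ p x)).card.choose 2 := by
  induction W using Finset.induction_on with
  | empty => simp [inducedEdges_empty]
  | @insert x W hxW ih =>
    rw [inducedEdges_insert G hxW, ih]
    by_cases hp : p x
    · have h1 : W.filter (fun y => G.Adj x y) = W.filter p := by
        apply Finset.filter_congr
        intro y hy
        rw [h x y]
        have hne : x ≠ y := fun he => hxW (he ▸ hy)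
        constructor
        · rintro ⟨-, hiff⟩; exact hiff.mp hp
        · intro hpy; exact ⟨hne, ⟨fun _ => hpy, fun _ => hp⟩⟩
      rw [h1, Finset.filter_insert, Finset.filter_insert, if_pos hp, if_neg (by simp [hp]),
        Finset.card_insert_of_notMem (by simp [hxW]), choose_two_succ]
      ring
    · have h1 : W.filter (fun y => G.Adj x y) = W.filter (fun y => ¬ p y) := by
        apply Finset.filter_congr
        intro y hy
        rw [h x y]
        have hne : x ≠ y := fun he => hxW (he ▸ hy)
        constructor
        · rintro ⟨-, hiff⟩ hpy; exact hp (hiff.mpr hpy)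
        · intro hpy; exact ⟨hne, ⟨fun hpx => absurd hpx hp, fun h' => absurd h' hpy⟩⟩
      rw [h1, Finset.filter_insert, Finset.filter_insert, if_neg hp, if_pos hp,
        Finset.card_insert_of_notMem (by simp [hxW]), choose_two_succ]
      ring

lemma exists_W (p : V → Prop) [DecidablePred p] (a b : ℕ) (ha : a ≤ ((univ : Finset V).filter p).card)
    (hb : b ≤ ((univ : Finset V).filter (fun x => ¬ p x)).card) :
    ∃ W : Finset V, W.card = a + b ∧ (W.filter p).card = a ∧
      (W.filter (fun x => ¬ p x)).card = b := by
  obtain ⟨T1, hT1sub, hT1⟩ := Finset.exists_subset_card_eq ha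
  obtain ⟨T0, hT0sub, hT0⟩ := Finset.exists_subset_card_eq hb
  have hd : Disjoint T1 T0 := by
    rw [Finset.disjoint_left]
    intro z h1 h0
    exact (Finset.mem_filter.mp (hT0sub h0)).2 (Finset.mem_filter.mp (hT1sub h1)).2
  have hf1 : (T1 ∪ T0).filter p = T1 := by
    ext z
    simp only [Finset.mem_filter, Finset.mem_union]
    constructor
    · rintro ⟨h1 | h0, hp⟩
      · exact h1
      · exact absurd hp (Finset.mem_filter.mp (hT0sub h0)).2
    · intro h1
      exact ⟨Or.inl h1, (Finset.mem_filter.mp (hT1sub h1)).2⟩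
  have hf0 : (T1 ∪ T0).filter (fun x => ¬ p x) = T0 := by
    ext z
    simp only [Finset.mem_filter, Finset.mem_union]
    constructor
    · rintro ⟨h1 | h0, hp⟩
      · exact absurd (Finset.mem_filter.mp (hT1sub h1)).2 hp
      · exact h0
    · intro h0
      exact ⟨Or.inr h0, (Finset.mem_filter.mp (hT0sub h0)).2⟩
  exact ⟨T1 ∪ T0, by rw [Finset.card_union_of_disjoint hd, hT1, hT0], by rw [hf1, hT1],
    by rw [hf0, hT0]⟩

variable {k : ℕ}

lemma stepA (H : ∀ W : Finset V, W.card = k → Even (inducedEdges G W)) (hk : 2 ≤ k)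
    {U : Finset V} (hU : U.card = k - 2) {x y : V} (hx : x ∉ U) (hy : y ∉ U) (hxy : x ≠ y) :
    (inducedEdges G U : ZMod 2) + ((U.filter (fun z => G.Adj x z)).card : ZMod 2)
      + ((U.filter (fun z => G.Adj y z)).card : ZMod 2) + adjTwo G x y = 0 := by
  have hxiU : x ∉ insert y U := by simp [hx, hxy]
  have hcard : (insert x (insert y U)).card = k := by
    rw [Finset.card_insert_of_notMem hxiU, Finset.card_insert_of_notMem hy, hU]
    omega
  have heven := H _ hcard
  rw [inducedEdges_insert G hxiU, inducedEdges_insert G hy] at heven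
  have hfilter : ((insert y U).filter (fun z => G.Adj x z)).card
      = (U.filter (fun z => G.Adj x z)).card + (if G.Adj x y then 1 else 0) := by
    rw [Finset.filter_insert]
    by_cases hadj : G.Adj x y
    · rw [if_pos hadj, if_pos hadj, Finset.card_insert_of_notMem (by simp [hy])]
    · rw [if_neg hadj, if_neg hadj]
      simp
  rw [hfilter] at heven
  have h0 : ((inducedEdges G U + (U.filter (fun z => G.Adj y z)).card
      + ((U.filter (fun z => G.Adj x z)).card + (if G.Adj x y then 1 else 0)) : ℕ)
      : ZMod 2) = 0 := (natCast_zmod_two_eq_zero_iff _).mpr heven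
  push_cast at h0
  simp only [adjTwo]
  linear_combination h0

lemma stepB (H : ∀ W : Finset V, W.card = k → Even (inducedEdges G W)) (hk : 2 ≤ k)
    (hn : k + 2 ≤ Fintype.card V) {x y z w : V} (hxy : x ≠ y) (hxz : x ≠ z) (hxw : x ≠ w)
    (hyz : y ≠ z) (hyw : y ≠ w) (hzw : z ≠ w) :
    adjTwo G x y + adjTwo G z w + adjTwo G x w + adjTwo G z y = 0 := by
  have hcard4 : ({x, y, z, w} : Finset V).card ≤ 4 :=
    card_insert_le' _ _ (card_insert_le' _ _ (card_insert_le' _ _ (by simp)))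
  have hle : k - 2 ≤ ((univ : Finset V) \ {x, y, z, w}).card := by
    have := Finset.le_card_sdiff ({x, y, z, w} : Finset V) (univ : Finset V)
    rw [Finset.card_univ] at this
    omega
  obtain ⟨U, hUsub, hUcard⟩ := Finset.exists_subset_card_eq hle
  have hmem : ∀ v ∈ U, v ∉ ({x, y, z, w} : Finset V) := by
    intro v hv
    exact (Finset.mem_sdiff.mp (hUsub hv)).2
  have hxU : x ∉ U := fun h => hmem x h (by simp)
  have hyU : y ∉ U := fun h => hmem y h (by simp)
  have hzU : z ∉ U := fun h => hmem z h (by simp)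
  have hwU : w ∉ U := fun h => hmem w h (by simp)
  have h1 := stepA G H hk hUcard hxU hyU hxy
  have h2 := stepA G H hk hUcard hzU hwU hzw
  have h3 := stepA G H hk hUcard hxU hwU hxw
  have h4 := stepA G H hk hUcard hzU hyU hyz.symm
  exact zmod4 _ _ _ _ _ _ _ _ _ h1 h2 h3 h4

lemma stepC (H : ∀ W : Finset V, W.card = k → Even (inducedEdges G W)) (hk : 2 ≤ k)
    (hn : k + 2 ≤ Fintype.card V) (hn7 : 7 ≤ Fintype.card V) :
    ∃ (c : ZMod 2) (d : V → ZMod 2), ∀ x y, x ≠ y → adjTwo G x y = c + d x + d y := by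
  obtain ⟨S, -, hS⟩ := Finset.exists_subset_card_eq (s := (univ : Finset V)) (n := 3)
    (by rw [Finset.card_univ]; omega)
  obtain ⟨q, p1, p2, hqp1, hqp2, hp12, rfl⟩ := Finset.card_eq_three.mp hS
  set h : V → V → ZMod 2 := fun a b => adjTwo G a b + adjTwo G a q + adjTwo G b q with hh
  have hsym : ∀ a b, h a b = h b a := by
    intro a b
    simp only [hh]
    rw [adjTwo_symm G a b]
    ring
  have hrepl : ∀ a b y, a ≠ b → a ≠ y → a ≠ q → b ≠ y → b ≠ q → y ≠ q →
      h a y = h b y := by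
    intro a b y hab hay haq hby hbq hyq
    have hB := stepB G H hk hn hay hab haq hby.symm hyq hbq
    exact zmod5 _ _ _ _ _ hB
  have hconst : ∀ x y, x ≠ y → x ≠ q → y ≠ q → h x y = h p1 p2 := by
    intro x y hxy hxq hyq
    have hb5 : ({q, x, y, p1, p2} : Finset V).card ≤ 5 :=
      card_insert_le' _ _ (card_insert_le' _ _ (card_insert_le' _ _
        (card_insert_le' _ _ (le_of_eq (Finset.card_singleton _)))))
    obtain ⟨z1, hz1⟩ := exists_not_mem_finset ({q, x, y, p1, p2} : Finset V) (by omega)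
    have hb6 : ({q, x, y, p1, p2, z1} : Finset V).card ≤ 6 :=
      card_insert_le' _ _ (card_insert_le' _ _ (card_insert_le' _ _
        (card_insert_le' _ _ (card_insert_le' _ _ (le_of_eq (Finset.card_singleton _))))))
    obtain ⟨z2, hz2⟩ := exists_not_mem_finset ({q, x, y, p1, p2, z1} : Finset V) (by omega)
    simp only [Finset.mem_insert, Finset.mem_singleton, not_or] at hz1 hz2
    obtain ⟨hz1q, hz1x, hz1y, hz1p1, hz1p2⟩ := hz1
    obtain ⟨hz2q, hz2x, hz2y, hz2p1, hz2p2, hz2z1⟩ := hz2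
    have e1 : h x y = h z1 y := hrepl x z1 y (Ne.symm hz1x) hxy hxq hz1y hz1q hyq
    have e2 : h y z1 = h z2 z1 := hrepl y z2 z1 (Ne.symm hz2y) (Ne.symm hz1y) hyq
      hz2z1 hz2q hz1q
    have e3 : h p1 p2 = h z1 p2 := hrepl p1 z1 p2 (Ne.symm hz1p1) hp12
      (Ne.symm hqp1) hz1p2 hz1q (Ne.symm hqp2)
    have e4 : h p2 z1 = h z2 z1 := hrepl p2 z2 z1 (Ne.symm hz2p2) (Ne.symm hz1p2)
      (Ne.symm hqp2) hz2z1 hz2q hz1q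
    rw [e1, hsym z1 y, e2, e3, hsym z1 p2, e4]
  refine ⟨h p1 p2, fun x => if x = q then h p1 p2 else adjTwo G x q, ?_⟩
  intro x y hxy
  dsimp only
  by_cases hxq : x = q
  · have hyq : y ≠ q := fun he => hxy (hxq.trans he.symm)
    rw [if_pos hxq, if_neg hyq, hxq, adjTwo_symm G q y]
    exact zmodc1 _ _
  · by_cases hyq : y = q
    · subst hyq
      rw [if_neg hxq, if_pos rfl]
      have := zmodc1 (adjTwo G x y) (h p1 p2)
      linear_combination this
    · rw [if_neg hxq, if_neg hyq]
      exact zmodc2 _ _ _ _ (hconst x y hxy hxq hyq)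

end Aux

theorem stmt_5 {V : Type*} [Fintype V] [DecidableEq V] (G : SimpleGraph V) (k : ℕ)
    (hk : 2 ≤ k) (hn : 2 ^ (2 * k) ≤ Fintype.card V) :
    (∀ W : Finset V, W.card = k → ¬ Odd (inducedEdges G W)) ↔
      ((∀ u v : V, ¬ G.Adj u v) ∨
        (Odd k ∧ IsCompleteBipartite G) ∨
        (Even (k.choose 2) ∧ IsCompleteGraph G) ∨
        (k % 4 = 1 ∧ IsTwoCliques G)) := by
  have hn2k : 2 * k + 4 ≤ Fintype.card V := le_trans (two_mul_add_le k hk) hn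
  have hsum : ∀ (s : Finset V) (p : V → Prop) [DecidablePred p],
      (s.filter p).card + (s.filter (fun x => ¬ p x)).card = s.card := fun s p _ =>
    Finset.card_filter_add_card_filter_not p
  constructor
  · intro H
    have H' : ∀ W : Finset V, W.card = k → Even (inducedEdges G W) := fun W hW =>
      Nat.not_odd_iff_even.mp (H W hW)
    obtain ⟨c, d, hcd⟩ := stepC G H' hk (by omega) (by omega)
    rcases zmod_cases c with rfl | rfl
    · -- complete bipartite / empty
      set p : V → Prop := fun x => d x = 1 with hp
      have hAdj : ∀ x y, G.Adj x y ↔ ¬ (p x ↔ p y) := by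
        intro x y
        by_cases hxy : x = y
        · subst hxy
          simp [G.irrefl]
        · have hc := hcd x y hxy
          rw [← zmod_bip (d x) (d y), ← hc]
          by_cases hadj : G.Adj x y <;> simp [adjTwo, hadj]
      by_cases hE : ∀ u v : V, ¬ G.Adj u v
      · exact Or.inl hE
      · push_neg at hE
        obtain ⟨u, v, huv⟩ := hE
        right; left
        have hpuv : ¬(p u ↔ p v) := (hAdj u v).mp huv
        have hex1 : ∃ z, p z := by
          by_cases h : p u
          · exact ⟨u, h⟩
          · refine ⟨v, ?_⟩
            by_contra h'
            exact hpuv ⟨fun hh => absurd hh h, fun hh => absurd hh h'⟩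
        have hex0 : ∃ z, ¬ p z := by
          by_cases h : p u
          · refine ⟨v, fun h' => hpuv ⟨fun _ => h', fun _ => h⟩⟩
          · exact ⟨u, h⟩
        have hc1 : 1 ≤ ((univ : Finset V).filter p).card := by
          obtain ⟨z, hz⟩ := hex1
          exact Finset.card_pos.mpr ⟨z, Finset.mem_filter.mpr ⟨Finset.mem_univ z, hz⟩⟩
        have hc0 : 1 ≤ ((univ : Finset V).filter (fun x => ¬ p x)).card := by
          obtain ⟨z, hz⟩ := hex0
          exact Finset.card_pos.mpr ⟨z, Finset.mem_filter.mpr ⟨Finset.mem_univ z, hz⟩⟩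
        have hsum' := hsum (univ : Finset V) p
        rw [Finset.card_univ] at hsum'
        have hodd : Odd k := by
          by_contra hoddk
          rw [Nat.not_odd_iff_even, Nat.even_iff] at hoddk
          rcases le_or_gt (k - 1) ((univ : Finset V).filter p).card with hbig | hsmall
          · obtain ⟨W, hWcard, hWa, hWb⟩ := exists_W p (k - 1) 1 hbig hc0
            have hEv := H' W (by omega)
            rw [count_bip G p hAdj W, hWa, hWb, Nat.even_iff] at hEv
            omega
          · obtain ⟨W, hWcard, hWa, hWb⟩ := exists_W p 1 (k - 1) hc1 (by omega)
            have hEv := H' W (by omega)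
            rw [count_bip G p hAdj W, hWa, hWb, Nat.even_iff] at hEv
            omega
        refine ⟨hodd, ⟨{x | p x}, ?_, ?_, ?_⟩⟩
        · intro a ha b hb hadj
          exact ((hAdj a b).mp hadj) ⟨fun _ => hb, fun _ => ha⟩
        · intro a ha b hb hadj
          exact ((hAdj a b).mp hadj) ⟨fun h => absurd h ha, fun h => absurd h hb⟩
        · intro a ha b hb
          exact (hAdj a b).mpr (fun hiff => hb (hiff.mp ha))
    · -- complete / two cliques
      set p : V → Prop := fun x => d x = 0 with hp
      have hAdj : ∀ x y, G.Adj x y ↔ (x ≠ y ∧ (p x ↔ p y)) := by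
        intro x y
        by_cases hxy : x = y
        · subst hxy
          simp [G.irrefl]
        · have hc := hcd x y hxy
          have : G.Adj x y ↔ (p x ↔ p y) := by
            rw [← zmod_cliq (d x) (d y), ← hc]
            by_cases hadj : G.Adj x y <;> simp [adjTwo, hadj]
          rw [this]
          simp [hxy]
      have hsum' := hsum (univ : Finset V) p
      rw [Finset.card_univ] at hsum'
      by_cases hall : (∀ x, p x) ∨ (∀ x, ¬ p x)
      · right; right; left
        have hcg : IsCompleteGraph G := by
          intro a b hab
          rw [hAdj]
          rcases hall with h | h
          · exact ⟨hab, ⟨fun _ => h b, fun _ => h a⟩⟩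
          · exact ⟨hab, ⟨fun h' => absurd h' (h a), fun h' => absurd h' (h b)⟩⟩
        refine ⟨?_, hcg⟩
        obtain ⟨W, -, hW⟩ := Finset.exists_subset_card_eq (s := (univ : Finset V)) (n := k)
          (by rw [Finset.card_univ]; omega)
        have hEv := H' W hW
        rw [count_cliq G p hAdj W] at hEv
        rcases hall with h | h
        · rw [Finset.filter_true_of_mem (fun x _ => h x),
            Finset.filter_false_of_mem (fun x _ => not_not_intro (h x)), hW] at hEv
          simpa using hEv
        · rw [Finset.filter_false_of_mem (fun x _ => h x),
            Finset.filter_true_of_mem (fun x _ => h x), hW] at hEv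
          simpa using hEv
      · right; right; right
        push_neg at hall
        obtain ⟨⟨u0, hu0⟩, ⟨u1, hu1⟩⟩ := hall
        have hc0 : 1 ≤ ((univ : Finset V).filter (fun x => ¬ p x)).card :=
          Finset.card_pos.mpr ⟨u0, Finset.mem_filter.mpr ⟨Finset.mem_univ _, hu0⟩⟩
        have hc1 : 1 ≤ ((univ : Finset V).filter p).card :=
          Finset.card_pos.mpr ⟨u1, Finset.mem_filter.mpr ⟨Finset.mem_univ _, hu1⟩⟩
        have hek : Even (k.choose 2) := by
          rcases le_or_gt k ((univ : Finset V).filter p).card with hbig | hsmall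
          · obtain ⟨W, hWcard, hWa, hWb⟩ := exists_W p k 0 hbig (by omega)
            have hEv := H' W (by omega)
            rw [count_cliq G p hAdj W, hWa, hWb] at hEv
            simpa using hEv
          · obtain ⟨W, hWcard, hWa, hWb⟩ := exists_W p 0 k (by omega) (by omega)
            have hEv := H' W (by omega)
            rw [count_cliq G p hAdj W, hWa, hWb] at hEv
            simpa using hEv
        have hek1 : Even ((k - 1).choose 2) := by
          rcases le_or_gt (k - 1) ((univ : Finset V).filter p).card with hbig | hsmall
          · obtain ⟨W, hWcard, hWa, hWb⟩ := exists_W p (k - 1) 1 hbig hc0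
            have hEv := H' W (by omega)
            rw [count_cliq G p hAdj W, hWa, hWb] at hEv
            simpa using hEv
          · obtain ⟨W, hWcard, hWa, hWb⟩ := exists_W p 1 (k - 1) hc1 (by omega)
            have hEv := H' W (by omega)
            rw [count_cliq G p hAdj W, hWa, hWb] at hEv
            simpa using hEv
        rw [even_choose_two] at hek hek1
        refine ⟨by omega, ⟨{x | p x}, ?_, ?_, ?_⟩⟩
        · intro a ha b hb hab
          exact (hAdj a b).mpr ⟨hab, ⟨fun _ => hb, fun _ => ha⟩⟩
        · intro a ha b hb hab
          exact (hAdj a b).mpr ⟨hab, ⟨fun h => absurd h ha, fun h => absurd h hb⟩⟩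
        · intro a ha b hb hadj
          exact hb (((hAdj a b).mp hadj).2.mp ha)
  · rintro (hE | ⟨hko, A, h1, h2, h3⟩ | ⟨hek, hcg⟩ | ⟨hk4, A, h1, h2, h3⟩) W hW <;>
      rw [Nat.not_odd_iff_even]
    · have hzero : inducedEdges G W = 0 := by
        rw [inducedEdges_eq_card, Finset.card_eq_zero, Finset.eq_empty_iff_forall_notMem]
        intro e he
        have hes := (Finset.mem_filter.mp he).2
        revert hes
        refine Sym2.ind (fun u v h' => ?_) e
        exact hE u v (G.mem_edgeSet.mp h')
      simp [hzero]
    · have hAdj : ∀ x y, G.Adj x y ↔ ¬((x ∈ A) ↔ (y ∈ A)) := by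
        intro x y
        constructor
        · intro hadj hiff
          by_cases hx : x ∈ A
          · exact h1 x hx y (hiff.mp hx) hadj
          · exact h2 x hx y (fun hy => hx (hiff.mpr hy)) hadj
        · intro hniff
          by_cases hx : x ∈ A
          · exact h3 x hx y (fun hy => hniff ⟨fun _ => hy, fun _ => hx⟩)
          · have hy : y ∈ A := by
              by_contra hy
              exact hniff ⟨fun h => absurd h hx, fun h => absurd h hy⟩
            exact (h3 y hy x hx).symm
      rw [count_bip G (fun x => x ∈ A) hAdj W]
      have hab : (W.filter (fun x => x ∈ A)).card + (W.filter (fun x => ¬ x ∈ A)).card = k := by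
        rw [hsum]; exact hW
      rw [Nat.odd_iff] at hko
      rw [Nat.even_mul, Nat.even_iff, Nat.even_iff]
      omega
    · have hAdj : ∀ x y, G.Adj x y ↔ (x ≠ y ∧ ((fun _ : V => True) x ↔ (fun _ : V => True) y)) := by
        intro x y
        simp only [iff_self, and_true]
        exact ⟨fun h => h.ne, fun h => hcg x y h⟩
      rw [count_cliq G _ hAdj W, Finset.filter_true_of_mem (fun x _ => trivial),
        Finset.filter_false_of_mem (fun x _ => not_not_intro trivial), hW]
      simpa using hek
    · have hAdj : ∀ x y, G.Adj x y ↔ (x ≠ y ∧ ((x ∈ A) ↔ (y ∈ A))) := by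
        intro x y
        constructor
        · intro hadj
          refine ⟨hadj.ne, ?_⟩
          constructor
          · intro hx
            by_contra hy
            exact h3 x hx y hy hadj
          · intro hy
            by_contra hx
            exact h3 y hy x hx hadj.symm
        · rintro ⟨hne, hiff⟩
          by_cases hx : x ∈ A
          · exact h1 x hx y (hiff.mp hx) hne
          · exact h2 x hx y (fun hy => hx (hiff.mpr hy)) hne
      rw [count_cliq G (fun x => x ∈ A) hAdj W]
      have hab : (W.filter (fun x => x ∈ A)).card + (W.filter (fun x => ¬ x ∈ A)).card = k := by
        rw [hsum]; exact hW
      rw [Nat.even_add, even_choose_two, even_choose_two]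
      omega
end

section
/- Let k ≥ 3 and let G be a graph on n ≥ 2^{2k} vertices. Then either G contains no induced k-vertex subgraph with an even number of edges, or G contains at least C(n,k)/(2^{2k²+1} k² n²) induced k-vertex subgraphs with an even number of edges. -/
open scoped Classical

namespace StmtNineAux

open Finset

/-! ### Basic facts about `inducedEdges` -/

noncomputable def edgeFin {V : Type*} [Fintype V] (G : SimpleGraph V) (U : Finset V) :
    Finset (Sym2 V) :=
  Finset.univ.filter (fun e : Sym2 V => e ∈ G.edgeSet ∧ ∀ v ∈ e, v ∈ U)

lemma mem_edgeFin {V : Type*} [Fintype V] (G : SimpleGraph V) (U : Finset V) (e : Sym2 V) :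
    e ∈ edgeFin G U ↔ e ∈ G.edgeSet ∧ ∀ v ∈ e, v ∈ U := by
  simp [edgeFin]

lemma inducedEdges_eq_card {V : Type*} [Fintype V] (G : SimpleGraph V) (U : Finset V) :
    inducedEdges G U = (edgeFin G U).card := by
  rw [inducedEdges, Nat.card_eq_fintype_card, edgeFin]
  convert Fintype.card_subtype _ using 2

lemma inducedEdges_empty {V : Type*} [Fintype V] (G : SimpleGraph V) :
    inducedEdges G (∅ : Finset V) = 0 := by
  rw [inducedEdges_eq_card]
  convert Finset.card_empty
  ext e
  induction e using Sym2.ind with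
  | _ a b =>
    rw [mem_edgeFin]
    simp only [Finset.notMem_empty, iff_false, not_and]
    intro _ h
    exact absurd (h a (Sym2.mem_mk_left a b)) (by simp)

lemma inducedEdges_insert {V : Type*} [Fintype V] [DecidableEq V] (G : SimpleGraph V)
    (v : V) (U : Finset V) (hv : v ∉ U) :
    inducedEdges G (insert v U) = inducedEdges G U + (U.filter (G.Adj v)).card := by
  classical
  rw [inducedEdges_eq_card, inducedEdges_eq_card]
  have hset : edgeFin G (insert v U)
      = edgeFin G U ∪ (U.filter (G.Adj v)).image (fun u => s(v, u)) := by
    ext e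
    induction e using Sym2.ind with
    | _ a b =>
      rw [Finset.mem_union, mem_edgeFin, mem_edgeFin]
      simp only [Finset.mem_image, SimpleGraph.mem_edgeSet, Sym2.mem_iff, Finset.mem_filter]
      constructor
      · rintro ⟨hab, hmem⟩
        have ha := hmem a (Or.inl rfl)
        have hb := hmem b (Or.inr rfl)
        rw [Finset.mem_insert] at ha hb
        rcases ha with rfl | ha
        · rcases hb with rfl | hb
          · exact absurd hab (G.irrefl)
          · exact Or.inr ⟨b, ⟨hb, hab⟩, rfl⟩
        · rcases hb with rfl | hb
          · exact Or.inr ⟨a, ⟨ha, hab.symm⟩, Sym2.eq_swap⟩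
          · refine Or.inl ⟨hab, ?_⟩
            intro w hw
            rcases hw with rfl | rfl <;> assumption
      · rintro (⟨hab, hmem⟩ | ⟨u, hu, hequ⟩)
        · refine ⟨hab, ?_⟩
          intro w hw
          rcases hw with rfl | rfl
          · exact Finset.mem_insert_of_mem (hmem w (Or.inl rfl))
          · exact Finset.mem_insert_of_mem (hmem w (Or.inr rfl))
        · rw [Sym2.eq_iff] at hequ
          rcases hequ with ⟨rfl, rfl⟩ | ⟨rfl, rfl⟩
          · refine ⟨hu.2, ?_⟩
            intro w hw
            rcases hw with rfl | rfl
            · exact Finset.mem_insert_self _ _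
            · exact Finset.mem_insert_of_mem hu.1
          · refine ⟨hu.2.symm, ?_⟩
            intro w hw
            rcases hw with rfl | rfl
            · exact Finset.mem_insert_of_mem hu.1
            · exact Finset.mem_insert_self _ _
  rw [hset, Finset.card_union_of_disjoint, Finset.card_image_of_injOn]
  · intro u hu u' hu' h
    rw [Finset.mem_coe, Finset.mem_filter] at hu hu'
    rw [Sym2.eq_iff] at h
    rcases h with ⟨-, h⟩ | ⟨h1, h2⟩
    · exact h
    · exact absurd (h1 ▸ hu'.1) hv
  · rw [Finset.disjoint_left]
    rintro e he he'
    rw [Finset.mem_image] at he'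
    obtain ⟨u, hu, rfl⟩ := he'
    rw [mem_edgeFin] at he
    exact hv (he.2 v (Sym2.mem_mk_left v u))

/-! ### The parity formula for "bad" sets -/

noncomputable def dg {V : Type*} [DecidableEq V] (G : SimpleGraph V) (T : Finset V) (u : V) :
    ZMod 2 := ((T.filter (G.Adj u)).card : ZMod 2)

lemma even_iff_cast (a : ℕ) : Even a ↔ (a : ZMod 2) = 0 := by
  rw [ZMod.natCast_eq_zero_iff]
  exact even_iff_two_dvd

lemma not_even_cast {a : ℕ} (h : ¬ Even a) : (a : ZMod 2) = 1 := by
  rw [even_iff_cast] at h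
  revert h
  generalize (a : ZMod 2) = x
  revert x; decide

lemma card_filter_cast {V : Type*} (s : Finset V) (p : V → Prop) :
    (((s.filter p).card : ZMod 2)) = ∑ u ∈ s, (if p u then (1 : ZMod 2) else 0) := by
  rw [Finset.sum_boole]

/-- From badness of `T`, the adjacency relation on the complement of `T`. -/
lemma bad_adj {V : Type*} [Fintype V] [DecidableEq V] (G : SimpleGraph V) (T : Finset V)
    (hbad : ∀ u v, u ∉ T → v ∉ T → u ≠ v →
      ¬ Even (inducedEdges G (insert u (insert v T))))
    {u v : V} (hu : u ∉ T) (hv : v ∉ T) (huv : u ≠ v) :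
    (if G.Adj u v then (1 : ZMod 2) else 0)
      = 1 + (inducedEdges G T : ZMod 2) + dg G T u + dg G T v := by
  have hvT : v ∉ T := hv
  have h1 : inducedEdges G (insert v T) = inducedEdges G T + (T.filter (G.Adj v)).card :=
    inducedEdges_insert G v T hv
  have hu2 : u ∉ insert v T := by
    simp only [Finset.mem_insert]
    rintro (rfl | h)
    exacts [huv rfl, hu h]
  have h2 : inducedEdges G (insert u (insert v T))
      = inducedEdges G (insert v T) + ((insert v T).filter (G.Adj u)).card :=
    inducedEdges_insert G u (insert v T) hu2
  have h3 : ((insert v T).filter (G.Adj u)).card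
      = (T.filter (G.Adj u)).card + (if G.Adj u v then 1 else 0) := by
    rw [Finset.filter_insert]
    by_cases hadj : G.Adj u v
    · rw [if_pos hadj, if_pos hadj,
        Finset.card_insert_of_notMem (fun hc => hv (Finset.mem_of_mem_filter v hc))]
    · rw [if_neg hadj, if_neg hadj, Nat.add_zero]
  have hne := hbad u v hu hv huv
  rw [h2, h1, h3] at hne
  have := not_even_cast hne
  push_cast at this
  rw [dg, dg]
  revert this
  generalize (inducedEdges G T : ZMod 2) = e
  generalize ((T.filter (G.Adj v)).card : ZMod 2) = dv
  generalize ((T.filter (G.Adj u)).card : ZMod 2) = du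
  generalize (if G.Adj u v then (1 : ZMod 2) else 0) = al
  revert e dv du al; decide

/-- The master parity formula: for `T` bad and `S` disjoint from `T`,
the parity of the number of edges induced by `S`. -/
lemma bad_formula {V : Type*} [Fintype V] [DecidableEq V] (G : SimpleGraph V) (T : Finset V)
    (hbad : ∀ u v, u ∉ T → v ∉ T → u ≠ v →
      ¬ Even (inducedEdges G (insert u (insert v T))))
    (S : Finset V) (hS : Disjoint S T) :
    (inducedEdges G S : ZMod 2)
      = (S.card.choose 2 : ZMod 2) * (1 + (inducedEdges G T : ZMod 2))
        + ((S.card - 1 : ℕ) : ZMod 2) * ∑ u ∈ S, dg G T u := by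
  classical
  revert hS
  induction S using Finset.induction_on with
  | empty =>
    intro _
    simp [inducedEdges_empty]
  | @insert a s ha ih =>
    intro hS
    have haT : a ∉ T := Finset.disjoint_left.1 hS (Finset.mem_insert_self a s)
    have hsT : Disjoint s T := hS.mono_left (Finset.subset_insert a s)
    have ihs := ih hsT
    have hcast : (inducedEdges G (insert a s) : ZMod 2)
        = (inducedEdges G s : ZMod 2) + ((s.filter (G.Adj a)).card : ZMod 2) := by
      rw [inducedEdges_insert G a s ha]; push_cast; ring
    have hterm : ∀ v ∈ s, (if G.Adj a v then (1 : ZMod 2) else 0)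
        = ((1 + (inducedEdges G T : ZMod 2)) + dg G T a) + dg G T v := by
      intro v hv
      have hvT : v ∉ T := Finset.disjoint_left.1 hsT hv
      have hav : a ≠ v := fun h => ha (h ▸ hv)
      rw [bad_adj G T hbad haT hvT hav]
    have hsum : ((s.filter (G.Adj a)).card : ZMod 2)
        = s.card • ((1 + (inducedEdges G T : ZMod 2)) + dg G T a) + ∑ v ∈ s, dg G T v := by
      rw [card_filter_cast s (G.Adj a), Finset.sum_congr rfl hterm, Finset.sum_add_distrib,
        Finset.sum_const]
    rw [Finset.card_insert_of_notMem ha, Finset.sum_insert ha, hcast, ihs, hsum]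
    set ε := 1 + (inducedEdges G T : ZMod 2) with hε
    set P := ∑ v ∈ s, dg G T v with hP
    set c := s.card with hc
    have hch : ((c + 1).choose 2 : ℕ) = c + c.choose 2 := by
      rw [Nat.choose_succ_succ c 1, Nat.choose_one_right]
    rw [hch, nsmul_eq_mul]
    rcases Nat.eq_zero_or_pos c with h0 | h1
    · have : s = ∅ := Finset.card_eq_zero.1 h0
      subst this
      simp [hP, h0]
    · have hsub : ((c - 1 : ℕ) : ZMod 2) = (c : ZMod 2) - 1 := by
        have : (1 : ℕ) ≤ c := h1
        push_cast [Nat.cast_sub this]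
        ring
      rw [Nat.add_sub_cancel, hsub]
      push_cast
      ring

/-! ### Binomial estimates -/

lemma choose_le_pow_mul_choose (n j : ℕ) : ∀ i, n.choose (j + i) ≤ n ^ i * n.choose j := by
  intro i
  induction i with
  | zero => simp
  | succ i ih =>
    have h1 : n.choose (j + i + 1) ≤ n * n.choose (j + i) := by
      calc n.choose (j + i + 1) ≤ n.choose (j + i + 1) * (j + i + 1) :=
            Nat.le_mul_of_pos_right _ (by omega)
        _ = n.choose (j + i) * (n - (j + i)) := Nat.choose_succ_right_eq n (j + i)
        _ ≤ n.choose (j + i) * n := Nat.mul_le_mul_left _ (Nat.sub_le _ _)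
        _ = n * n.choose (j + i) := Nat.mul_comm _ _
    calc n.choose (j + (i + 1)) = n.choose (j + i + 1) := by ring_nf
      _ ≤ n * n.choose (j + i) := h1
      _ ≤ n * (n ^ i * n.choose j) := Nat.mul_le_mul_left n ih
      _ = n ^ (i + 1) * n.choose j := by ring

lemma choose_le_sixteen (n q j : ℕ) (h1 : j ≤ q) (h2 : n ≤ 16 * (q + 1 - j)) :
    n.choose j ≤ 16 ^ j * q.choose j := by
  have hfac : 0 < j.factorial := Nat.factorial_pos j
  have key : n.choose j * j.factorial ≤ (16 ^ j * q.choose j) * j.factorial := by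
    calc n.choose j * j.factorial = j.factorial * n.choose j := Nat.mul_comm _ _
      _ = n.descFactorial j := (Nat.descFactorial_eq_factorial_mul_choose n j).symm
      _ ≤ n ^ j := Nat.descFactorial_le_pow n j
      _ ≤ (16 * (q + 1 - j)) ^ j := Nat.pow_le_pow_left h2 j
      _ = 16 ^ j * (q + 1 - j) ^ j := by rw [Nat.mul_pow]
      _ ≤ 16 ^ j * q.descFactorial j :=
            Nat.mul_le_mul_left _ (q.pow_sub_le_descFactorial j)
      _ = 16 ^ j * (j.factorial * q.choose j) := by
            rw [Nat.descFactorial_eq_factorial_mul_choose]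
      _ = (16 ^ j * q.choose j) * j.factorial := by ring
  exact Nat.le_of_mul_le_mul_right key hfac

lemma chooseChain {n q j k : ℕ} (h1 : j ≤ q) (h2 : n ≤ 16 * (q + 1 - j)) (h3 : j ≤ k)
    (h4 : k ≤ j + 2) (h5 : 1 ≤ n) :
    n.choose k ≤ 16 ^ k * n ^ 2 * q.choose j := by
  have e1 : n.choose k ≤ n ^ (k - j) * n.choose j := by
    have := choose_le_pow_mul_choose n j (k - j)
    rwa [Nat.add_sub_cancel' h3] at this
  have e2 : n ^ (k - j) ≤ n ^ 2 := Nat.pow_le_pow_right h5 (by omega)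
  calc n.choose k ≤ n ^ (k - j) * n.choose j := e1
    _ ≤ n ^ 2 * n.choose j := Nat.mul_le_mul_right _ e2
    _ ≤ n ^ 2 * (16 ^ j * q.choose j) :=
          Nat.mul_le_mul_left _ (choose_le_sixteen n q j h1 h2)
    _ ≤ n ^ 2 * (16 ^ k * q.choose j) :=
          Nat.mul_le_mul_left _ (Nat.mul_le_mul_right _ (Nat.pow_le_pow_right (by norm_num) h3))
    _ = 16 ^ k * n ^ 2 * q.choose j := by ring

lemma twenty_le : ∀ k, 3 ≤ k → 20 * k ≤ 2 ^ (2 * k) := by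
  intro k hk
  induction k, hk using Nat.le_induction with
  | base => norm_num
  | succ m hm ih =>
    have h4 : 2 ^ (2 * (m + 1)) = 4 * 2 ^ (2 * m) := by ring
    omega

lemma zmod_fix (x t : ZMod 2) (h : ¬ x = t) : 1 + x = t := by revert x t; decide

lemma zmod_not_one {x : ZMod 2} (h : ¬ x = 1) : x = 0 := by revert h; revert x; decide

lemma zmod_not_zero {x : ZMod 2} (h : ¬ x = 0) : x = 1 := by revert h; revert x; decide

/-! ### The key counting lemma -/

lemma key {V : Type*} [Fintype V] [DecidableEq V] (G : SimpleGraph V) {k : ℕ} (hk : 3 ≤ k)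
    (hn20 : 20 * k ≤ Fintype.card V)
    (T : Finset V) (hTcard : T.card = k - 2)
    (hbad : ∀ u v, u ∉ T → v ∉ T → u ≠ v →
      ¬ Even (inducedEdges G (insert u (insert v T))))
    (S₀ : Finset V) (hdisj : Disjoint S₀ T) (hS₀card : S₀.card = k)
    (hS₀even : Even (inducedEdges G S₀)) :
    (Fintype.card V).choose k ≤
      16 ^ k * (Fintype.card V) ^ 2 *
        (Finset.univ.filter
          (fun W : Finset V => W.card = k ∧ Even (inducedEdges G W))).card := by
  classical
  set n := Fintype.card V with hn
  set NN := (Finset.univ.filter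
    (fun W : Finset V => W.card = k ∧ Even (inducedEdges G W))).card with hNN
  set Tc := (Finset.univ : Finset V) \ T with hTc
  have hTcc : Tc.card = n - (k - 2) := by
    rw [hTc, Finset.card_sdiff_of_subset (Finset.subset_univ T), hTcard, Finset.card_univ]
  have hsub0 : S₀ ⊆ Tc := by
    intro x hx
    rw [hTc, Finset.mem_sdiff]
    exact ⟨Finset.mem_univ x, Finset.disjoint_left.1 hdisj hx⟩
  have hform : ∀ W : Finset V, W ⊆ Tc → W.card = k →
      (inducedEdges G W : ZMod 2)
        = (k.choose 2 : ZMod 2) * (1 + (inducedEdges G T : ZMod 2))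
          + ((k - 1 : ℕ) : ZMod 2) * ∑ u ∈ W, dg G T u := by
    intro W hW hWc
    have hdisjW : Disjoint W T := by
      rw [Finset.disjoint_left]
      intro x hx
      have := hW hx
      rw [hTc, Finset.mem_sdiff] at this
      exact this.2
    rw [bad_formula G T hbad W hdisjW, hWc]
  by_cases hall : ∀ W ∈ Tc.powersetCard k, Even (inducedEdges G W)
  · have hsubset : Tc.powersetCard k ⊆ Finset.univ.filter
        (fun W : Finset V => W.card = k ∧ Even (inducedEdges G W)) := by
      intro W hW
      exact Finset.mem_filter.2
        ⟨Finset.mem_univ W, (Finset.mem_powersetCard.1 hW).2, hall W hW⟩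
    have hcard : (n - (k - 2)).choose k ≤ NN := by
      have := Finset.card_le_card hsubset
      rwa [Finset.card_powersetCard, hTcc] at this
    refine le_trans (chooseChain (n := n) (q := n - (k - 2)) (j := k) (k := k)
      (by omega) (by omega) le_rfl (by omega) (by omega)) ?_
    exact Nat.mul_le_mul_left _ hcard
  · push_neg at hall
    obtain ⟨W₁, hW₁mem, hW₁odd⟩ := hall
    obtain ⟨hW₁sub, hW₁card⟩ := Finset.mem_powersetCard.1 hW₁mem
    set ε := 1 + (inducedEdges G T : ZMod 2) with hε
    have h0 : (k.choose 2 : ZMod 2) * ε + ((k - 1 : ℕ) : ZMod 2) * ∑ u ∈ S₀, dg G T u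
        = 0 := by
      rw [← hform S₀ hsub0 hS₀card]
      exact (even_iff_cast _).1 hS₀even
    have h1 : (k.choose 2 : ZMod 2) * ε + ((k - 1 : ℕ) : ZMod 2) * ∑ u ∈ W₁, dg G T u
        = 1 := by
      rw [← hform W₁ hW₁sub hW₁card]
      exact not_even_cast hW₁odd
    have hPdiff : (∑ u ∈ S₀, dg G T u) ≠ ∑ u ∈ W₁, dg G T u := by
      intro h
      rw [h] at h0
      rw [h0] at h1
      exact absurd h1 (by decide)
    have ho : ∃ o ∈ Tc, dg G T o = 1 := by
      by_contra hno
      push_neg at hno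
      have hz : ∀ u ∈ Tc, dg G T u = 0 := fun u hu => zmod_not_one (hno u hu)
      apply hPdiff
      rw [Finset.sum_congr rfl (fun u hu => hz u (hsub0 hu)),
          Finset.sum_congr rfl (fun u hu => hz u (hW₁sub hu))]
      simp
    have he : ∃ e ∈ Tc, dg G T e = 0 := by
      by_contra hno
      push_neg at hno
      have hz : ∀ u ∈ Tc, dg G T u = 1 := fun u hu => zmod_not_zero (hno u hu)
      apply hPdiff
      rw [Finset.sum_congr rfl (fun u hu => hz u (hsub0 hu)),
          Finset.sum_congr rfl (fun u hu => hz u (hW₁sub hu)),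
          Finset.sum_const, Finset.sum_const, hS₀card, hW₁card]
    obtain ⟨o₀, ho₀Tc, ho₀⟩ := ho
    obtain ⟨e₀, he₀Tc, he₀⟩ := he
    have hoe : o₀ ≠ e₀ := by
      intro h
      rw [h, he₀] at ho₀
      exact absurd ho₀ (by decide)
    set τ := ∑ u ∈ S₀, dg G T u with hτ
    set R := Tc \ {o₀, e₀} with hR
    have hpair : ({o₀, e₀} : Finset V) ⊆ Tc := by
      intro x hx
      rcases Finset.mem_insert.1 hx with rfl | hx
      · exact ho₀Tc
      · rw [Finset.mem_singleton] at hx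
        subst hx
        exact he₀Tc
    have hRcard : R.card = n - k := by
      rw [hR, Finset.card_sdiff_of_subset hpair, Finset.card_pair hoe, hTcc]
      omega
    set f : Finset V → Finset V :=
      fun B => if (∑ u ∈ B, dg G T u) = τ then insert e₀ B else insert o₀ B with hf
    have hBfacts : ∀ B ∈ R.powersetCard (k - 1),
        o₀ ∉ B ∧ e₀ ∉ B ∧ B ⊆ Tc ∧ B.card = k - 1 := by
      intro B hB
      obtain ⟨hBR, hBc⟩ := Finset.mem_powersetCard.1 hB
      refine ⟨?_, ?_, hBR.trans Finset.sdiff_subset, hBc⟩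
      · intro hc
        have := hBR hc
        rw [hR, Finset.mem_sdiff] at this
        exact this.2 (by simp)
      · intro hc
        have := hBR hc
        rw [hR, Finset.mem_sdiff] at this
        exact this.2 (by simp)
    have hfmem : ∀ B ∈ R.powersetCard (k - 1),
        f B ∈ Finset.univ.filter
          (fun W : Finset V => W.card = k ∧ Even (inducedEdges G W)) := by
      intro B hB
      obtain ⟨ho₀B, he₀B, hBTc, hBc⟩ := hBfacts B hB
      have hfsub : f B ⊆ Tc := by
        simp only [hf]
        split
        · exact Finset.insert_subset he₀Tc hBTc
        · exact Finset.insert_subset ho₀Tc hBTc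
      have hfcard : (f B).card = k := by
        simp only [hf]
        split
        · rw [Finset.card_insert_of_notMem he₀B, hBc]
          omega
        · rw [Finset.card_insert_of_notMem ho₀B, hBc]
          omega
      have hfP : (∑ u ∈ f B, dg G T u) = τ := by
        simp only [hf]
        split
        · rename_i hEq
          rw [Finset.sum_insert he₀B, he₀, hEq, zero_add]
        · rename_i hNe
          rw [Finset.sum_insert ho₀B, ho₀]
          exact zmod_fix _ _ hNe
      have hfeven : Even (inducedEdges G (f B)) := by
        rw [even_iff_cast, hform (f B) hfsub hfcard, hfP]
        exact h0
      exact Finset.mem_filter.2 ⟨Finset.mem_univ _, hfcard, hfeven⟩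
    have hinj : Set.InjOn f (R.powersetCard (k - 1)) := by
      have hkey : ∀ C : Finset V, o₀ ∉ C → e₀ ∉ C → (f C) \ {o₀, e₀} = C := by
        intro C hC1 hC2
        simp only [hf]
        ext x
        constructor
        · intro hx
          rw [Finset.mem_sdiff] at hx
          obtain ⟨hx1, hx2⟩ := hx
          simp only [Finset.mem_insert, Finset.mem_singleton] at hx2
          push_neg at hx2
          split at hx1
          · rcases Finset.mem_insert.1 hx1 with rfl | hx1
            · exact absurd rfl hx2.2
            · exact hx1
          · rcases Finset.mem_insert.1 hx1 with rfl | hx1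
            · exact absurd rfl hx2.1
            · exact hx1
        · intro hx
          rw [Finset.mem_sdiff]
          constructor
          · split <;> exact Finset.mem_insert_of_mem hx
          · simp only [Finset.mem_insert, Finset.mem_singleton]
            push_neg
            exact ⟨fun h => hC1 (h ▸ hx), fun h => hC2 (h ▸ hx)⟩
      intro B hB B' hB' hEq
      rw [Finset.mem_coe] at hB hB'
      obtain ⟨h1, h2, _, _⟩ := hBfacts B hB
      obtain ⟨h1', h2', _, _⟩ := hBfacts B' hB'
      rw [← hkey B h1 h2, ← hkey B' h1' h2', hEq]
    have hcard2 : (n - k).choose (k - 1) ≤ NN := by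
      have := Finset.card_le_card_of_injOn f hfmem hinj
      rwa [Finset.card_powersetCard, hRcard] at this
    refine le_trans (chooseChain (n := n) (q := n - k) (j := k - 1) (k := k)
      (by omega) (by omega) (by omega) (by omega) (by omega)) ?_
    exact Nat.mul_le_mul_left _ hcard2

/-! ### Good sets and the choice function -/

def Good {V : Type*} [Fintype V] (G : SimpleGraph V) (k : ℕ) (T : Finset V) : Prop :=
  ∃ W : Finset V, T ⊆ W ∧ W.card = k ∧ Even (inducedEdges G W)

noncomputable def pick {V : Type*} [Fintype V] (G : SimpleGraph V) (k : ℕ) (T : Finset V) :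
    Finset V :=
  if h : Good G k T then h.choose else ∅

lemma pick_spec {V : Type*} [Fintype V] (G : SimpleGraph V) (k : ℕ) (T : Finset V)
    (h : Good G k T) :
    T ⊆ pick G k T ∧ (pick G k T).card = k ∧ Even (inducedEdges G (pick G k T)) := by
  rw [pick, dif_pos h]
  exact h.choose_spec

end StmtNineAux

theorem stmt_9 {V : Type*} [Fintype V] [DecidableEq V] (G : SimpleGraph V) (k : ℕ)
    (hk : 3 ≤ k) (hn : 2 ^ (2 * k) ≤ Fintype.card V) :
    Nat.card {W : Finset V // W.card = k ∧ Even (inducedEdges G W)} = 0 ∨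
      ((Fintype.card V).choose k : ℝ) /
          ((2 : ℝ) ^ (2 * k ^ 2 + 1) * (k : ℝ) ^ 2 * (Fintype.card V : ℝ) ^ 2) ≤
        (Nat.card {W : Finset V // W.card = k ∧ Even (inducedEdges G W)} : ℝ) := by
  classical
  by_cases h0 : Nat.card {W : Finset V // W.card = k ∧ Even (inducedEdges G W)} = 0
  · exact Or.inl h0
  right
  set n := Fintype.card V with hndef
  set NN := (Finset.univ.filter
    (fun W : Finset V => W.card = k ∧ Even (inducedEdges G W))).card with hNNdef
  have hcardeq : Nat.card {W : Finset V // W.card = k ∧ Even (inducedEdges G W)} = NN := by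
    rw [Nat.card_eq_fintype_card, hNNdef]
    convert Fintype.card_subtype _ using 2
  rw [hcardeq] at h0 ⊢
  have hNN1 : 1 ≤ NN := by omega
  have h20 : 20 * k ≤ n := le_trans (StmtNineAux.twenty_le k hk) hn
  set GS := (Finset.univ.powersetCard (k - 2)).filter (StmtNineAux.Good G k) with hGSdef
  have hg : GS.card ≤ k.choose 2 * NN := by
    have hfib : ∀ W ∈ GS.image (StmtNineAux.pick G k),
        (GS.filter (fun T => StmtNineAux.pick G k T = W)).card ≤ k.choose 2 := by
      intro W hW
      rw [Finset.mem_image] at hW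
      obtain ⟨T₀, hT₀, rfl⟩ := hW
      have hT₀G : StmtNineAux.Good G k T₀ := (Finset.mem_filter.1 hT₀).2
      have hWk : (StmtNineAux.pick G k T₀).card = k :=
        (StmtNineAux.pick_spec G k T₀ hT₀G).2.1
      have hsub : GS.filter (fun T => StmtNineAux.pick G k T = StmtNineAux.pick G k T₀)
          ⊆ (StmtNineAux.pick G k T₀).powersetCard (k - 2) := by
        intro T hT
        obtain ⟨hTGS, hTf⟩ := Finset.mem_filter.1 hT
        have hTG : StmtNineAux.Good G k T := (Finset.mem_filter.1 hTGS).2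
        have hTc : T.card = k - 2 :=
          (Finset.mem_powersetCard.1 (Finset.mem_filter.1 hTGS).1).2
        exact Finset.mem_powersetCard.2
          ⟨hTf ▸ (StmtNineAux.pick_spec G k T hTG).1, hTc⟩
      calc (GS.filter (fun T => StmtNineAux.pick G k T = StmtNineAux.pick G k T₀)).card
          ≤ ((StmtNineAux.pick G k T₀).powersetCard (k - 2)).card :=
            Finset.card_le_card hsub
        _ = k.choose (k - 2) := by rw [Finset.card_powersetCard, hWk]
        _ = k.choose 2 := by
            rw [← Nat.choose_symm (show k - 2 ≤ k by omega)]
            congr 1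
            omega
    have himg : GS.image (StmtNineAux.pick G k) ⊆ Finset.univ.filter
        (fun W : Finset V => W.card = k ∧ Even (inducedEdges G W)) := by
      intro W hW
      rw [Finset.mem_image] at hW
      obtain ⟨T, hT, rfl⟩ := hW
      have hTG : StmtNineAux.Good G k T := (Finset.mem_filter.1 hT).2
      obtain ⟨-, h2, h3⟩ := StmtNineAux.pick_spec G k T hTG
      exact Finset.mem_filter.2 ⟨Finset.mem_univ _, h2, h3⟩
    calc GS.card ≤ k.choose 2 * (GS.image (StmtNineAux.pick G k)).card :=
          Finset.card_le_mul_card_image GS _ hfib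
      _ ≤ k.choose 2 * NN := Nat.mul_le_mul_left _ (Finset.card_le_card himg)
  have hkk : k.choose 2 ≤ k * k := by
    calc k.choose 2 ≤ k ^ 2 := Nat.choose_le_pow k 2
      _ = k * k := pow_two k
  have hmain : n.choose k ≤ 16 ^ k * (k * k) * n ^ 2 * NN := by
    by_cases hcase : (n - k).choose (k - 2) ≤ GS.card
    · have hchain : n.choose k ≤ 16 ^ k * n ^ 2 * (n - k).choose (k - 2) :=
        StmtNineAux.chooseChain (n := n) (q := n - k) (j := k - 2) (k := k)
          (by omega) (by omega) (by omega) (by omega) (by omega)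
      calc n.choose k ≤ 16 ^ k * n ^ 2 * (n - k).choose (k - 2) := hchain
        _ ≤ 16 ^ k * n ^ 2 * (k.choose 2 * NN) :=
            Nat.mul_le_mul_left _ (le_trans hcase hg)
        _ = 16 ^ k * k.choose 2 * n ^ 2 * NN := by ring
        _ ≤ 16 ^ k * (k * k) * n ^ 2 * NN := by
            exact Nat.mul_le_mul_right _ (Nat.mul_le_mul_right _
              (Nat.mul_le_mul_left _ hkk))
    · have hex : ∃ S₀ : Finset V, S₀.card = k ∧ Even (inducedEdges G S₀) := by
        have hne : (Finset.univ.filter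
            (fun W : Finset V => W.card = k ∧ Even (inducedEdges G W))).Nonempty :=
          Finset.card_pos.1 (by omega)
        obtain ⟨W, hW⟩ := hne
        exact ⟨W, (Finset.mem_filter.1 hW).2⟩
      obtain ⟨S₀, hS₀card, hS₀even⟩ := hex
      have hTex : ∃ T ∈ (Finset.univ \ S₀).powersetCard (k - 2),
          ¬ StmtNineAux.Good G k T := by
        by_contra hcon
        push_neg at hcon
        have hsub : (Finset.univ \ S₀).powersetCard (k - 2) ⊆ GS := by
          intro T hT
          exact Finset.mem_filter.2
            ⟨Finset.mem_powersetCard.2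
              ⟨Finset.subset_univ _, (Finset.mem_powersetCard.1 hT).2⟩, hcon T hT⟩
        have hle := Finset.card_le_card hsub
        rw [Finset.card_powersetCard, Finset.card_sdiff_of_subset (Finset.subset_univ S₀),
          Finset.card_univ, hS₀card, ← hndef] at hle
        omega
      obtain ⟨T, hTmem, hTbad⟩ := hTex
      obtain ⟨hTsub, hTcard⟩ := Finset.mem_powersetCard.1 hTmem
      have hdisj : Disjoint S₀ T := by
        rw [Finset.disjoint_right]
        intro x hx
        have hx2 := hTsub hx
        rw [Finset.mem_sdiff] at hx2
        exact hx2.2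
      have hbad : ∀ u v, u ∉ T → v ∉ T → u ≠ v →
          ¬ Even (inducedEdges G (insert u (insert v T))) := by
        intro u v hu hv huv hEv
        apply hTbad
        have hu2 : u ∉ insert v T := by
          rw [Finset.mem_insert]
          push_neg
          exact ⟨huv, hu⟩
        refine ⟨insert u (insert v T),
          (Finset.subset_insert v T).trans (Finset.subset_insert u (insert v T)), ?_, hEv⟩
        rw [Finset.card_insert_of_notMem hu2, Finset.card_insert_of_notMem hv, hTcard]
        omega
      have hkey := StmtNineAux.key G hk h20 T hTcard hbad S₀ hdisj hS₀card hS₀even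
      calc n.choose k ≤ 16 ^ k * n ^ 2 * NN := hkey
        _ ≤ 16 ^ k * (k * k) * n ^ 2 * NN := by
            have h1k : 1 ≤ k * k := Nat.one_le_iff_ne_zero.2 (by positivity)
            calc 16 ^ k * n ^ 2 * NN = 16 ^ k * 1 * n ^ 2 * NN := by ring
              _ ≤ 16 ^ k * (k * k) * n ^ 2 * NN :=
                  Nat.mul_le_mul_right _ (Nat.mul_le_mul_right _
                    (Nat.mul_le_mul_left _ h1k))
  -- pass to the reals
  have hnpos : 0 < n := by omega
  have hD : (0:ℝ) < 2 ^ (2 * k ^ 2 + 1) * (k:ℝ)^2 * (n:ℝ)^2 := by positivity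
  rw [div_le_iff₀ hD]
  have h4k : 4 * k ≤ 2 * k ^ 2 + 1 := by
    have h3k : 3 * k ≤ k * k := Nat.mul_le_mul hk (le_refl k)
    have hp2 : k ^ 2 = k * k := pow_two k
    omega
  have h16 : (16:ℝ) ^ k ≤ (2:ℝ) ^ (2 * k ^ 2 + 1) := by
    calc (16:ℝ) ^ k = (2:ℝ) ^ (4 * k) := by
          rw [show (16:ℝ) = 2 ^ 4 by norm_num, ← pow_mul]
      _ ≤ (2:ℝ) ^ (2 * k ^ 2 + 1) := by
          exact pow_le_pow_right₀ (by norm_num) h4k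
  calc (n.choose k : ℝ) ≤ ((16 ^ k * (k * k) * n ^ 2 * NN : ℕ) : ℝ) := by
        exact_mod_cast hmain
    _ = (16:ℝ) ^ k * ((k:ℝ)^2 * (n:ℝ)^2 * (NN:ℝ)) := by push_cast; ring
    _ ≤ (2:ℝ) ^ (2 * k ^ 2 + 1) * ((k:ℝ)^2 * (n:ℝ)^2 * (NN:ℝ)) :=
        mul_le_mul_of_nonneg_right h16 (by positivity)
    _ = (NN:ℝ) * ((2:ℝ) ^ (2 * k ^ 2 + 1) * (k:ℝ)^2 * (n:ℝ)^2) := by ring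
end

section
/- Let (P,≤) be a finite lattice, f : P → ℝ a function, and let S = {x ∈ P : ∃ y ∈ P with y ≤ x and f(y) ≠ 0} be the upward closure of the support of f. Enumerate S = {x₁,…,xₙ} and define the n×n matrix A by a_{ij} = f(xᵢ ∧ xⱼ). Then det(A) = ∏_{i=1}^{n} Σ_{xⱼ ∈ S, xⱼ ≤ xᵢ} f(xⱼ) μ(xⱼ, xᵢ), where μ is the Möbius function of the poset P. -/
open scoped Classical
open Matrix

theorem stmt_12 {P : Type*} [Fintype P] [Lattice P] (f : P → ℝ)
    (mu : P → P → ℝ)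
    (hmu_refl : ∀ x : P, mu x x = 1)
    (hmu_lt : ∀ x y : P, x < y →
      mu x y = -∑ z ∈ Finset.univ.filter (fun z : P => x ≤ z ∧ z < y), mu x z)
    (hmu_not : ∀ x y : P, ¬ x ≤ y → mu x y = 0)
    (n : ℕ) (x : Fin n → P) (hx : Function.Injective x)
    (hxS : ∀ p : P, (∃ y ≤ p, f y ≠ 0) ↔ ∃ i : Fin n, x i = p) :
    Matrix.det (Matrix.of fun i j : Fin n => f (x i ⊓ x j)) =
      ∏ i : Fin n,
        ∑ p ∈ Finset.univ.filter (fun p : P => (∃ y ≤ p, f y ≠ 0) ∧ p ≤ x i),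
          f p * mu p (x i) := by
  classical
  set g : P → ℝ := fun p =>
    ∑ q ∈ Finset.univ.filter (fun q : P => (∃ y ≤ q, f y ≠ 0) ∧ q ≤ p), f q * mu q p with hg
  -- Möbius recursion: the full interval sum is a delta function
  have hmusum : ∀ q w : P, q ≤ w →
      (∑ p ∈ Finset.univ.filter (fun p : P => q ≤ p ∧ p ≤ w), mu q p)
        = if q = w then 1 else 0 := by
    intro q w hqw
    rcases eq_or_lt_of_le hqw with rfl | hlt
    · rw [if_pos rfl]
      have hs : Finset.univ.filter (fun p : P => q ≤ p ∧ p ≤ q) = {q} := by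
        ext p
        simp only [Finset.mem_filter, Finset.mem_univ, true_and, Finset.mem_singleton]
        constructor
        · rintro ⟨h1, h2⟩; exact le_antisymm h2 h1
        · rintro rfl; exact ⟨le_refl _, le_refl _⟩
      rw [hs, Finset.sum_singleton, hmu_refl]
    · rw [if_neg (ne_of_lt hlt)]
      have hsplit : Finset.univ.filter (fun p : P => q ≤ p ∧ p ≤ w)
          = insert w (Finset.univ.filter (fun p : P => q ≤ p ∧ p < w)) := by
        ext p
        simp only [Finset.mem_insert, Finset.mem_filter, Finset.mem_univ, true_and]
        constructor
        · rintro ⟨h1, h2⟩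
          rcases eq_or_lt_of_le h2 with rfl | h2'
          · exact Or.inl rfl
          · exact Or.inr ⟨h1, h2'⟩
        · rintro (rfl | ⟨h1, h2⟩)
          · exact ⟨hqw, le_refl _⟩
          · exact ⟨h1, h2.le⟩
      rw [hsplit, Finset.sum_insert (by simp), hmu_lt q w hlt]
      ring
  -- key identity: summing g over elements of S below w recovers f w
  have hkey : ∀ w : P,
      (∑ k ∈ Finset.univ.filter (fun k : Fin n => x k ≤ w), g (x k)) = f w := by
    intro w
    have himg : (Finset.univ.filter (fun k : Fin n => x k ≤ w)).image x
        = Finset.univ.filter (fun p : P => (∃ y ≤ p, f y ≠ 0) ∧ p ≤ w) := by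
      ext p
      simp only [Finset.mem_image, Finset.mem_filter, Finset.mem_univ, true_and]
      constructor
      · rintro ⟨k, hk, rfl⟩
        exact ⟨(hxS (x k)).2 ⟨k, rfl⟩, hk⟩
      · rintro ⟨h1, h2⟩
        obtain ⟨k, rfl⟩ := (hxS p).1 h1
        exact ⟨k, h2, rfl⟩
    have hre : (∑ k ∈ Finset.univ.filter (fun k : Fin n => x k ≤ w), g (x k))
        = ∑ p ∈ Finset.univ.filter (fun p : P => (∃ y ≤ p, f y ≠ 0) ∧ p ≤ w), g p := by
      rw [← himg, Finset.sum_image (fun a _ b _ h => hx h)]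
    rw [hre, hg]
    -- extend inner sums to the common index set A(w)
    have hext : ∀ p ∈ Finset.univ.filter (fun p : P => (∃ y ≤ p, f y ≠ 0) ∧ p ≤ w),
        (∑ q ∈ Finset.univ.filter (fun q : P => (∃ y ≤ q, f y ≠ 0) ∧ q ≤ p), f q * mu q p)
          = ∑ q ∈ Finset.univ.filter (fun q : P => (∃ y ≤ q, f y ≠ 0) ∧ q ≤ w),
              f q * mu q p := by
      intro p hp
      simp only [Finset.mem_filter, Finset.mem_univ, true_and] at hp
      apply Finset.sum_subset
      · intro q hq
        simp only [Finset.mem_filter, Finset.mem_univ, true_and] at hq ⊢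
        exact ⟨hq.1, hq.2.trans hp.2⟩
      · intro q hq hq'
        simp only [Finset.mem_filter, Finset.mem_univ, true_and] at hq hq'
        have : ¬ q ≤ p := fun h => hq' ⟨hq.1, h⟩
        rw [hmu_not q p this, mul_zero]
    rw [Finset.sum_congr rfl hext, Finset.sum_comm]
    have hinner : ∀ q ∈ Finset.univ.filter (fun q : P => (∃ y ≤ q, f y ≠ 0) ∧ q ≤ w),
        (∑ p ∈ Finset.univ.filter (fun p : P => (∃ y ≤ p, f y ≠ 0) ∧ p ≤ w), f q * mu q p)
          = f q * (if q = w then 1 else 0) := by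
      intro q hq
      simp only [Finset.mem_filter, Finset.mem_univ, true_and] at hq
      rw [← Finset.mul_sum]
      congr 1
      have hsub : Finset.univ.filter (fun p : P => q ≤ p ∧ p ≤ w)
          ⊆ Finset.univ.filter (fun p : P => (∃ y ≤ p, f y ≠ 0) ∧ p ≤ w) := by
        intro p hp
        simp only [Finset.mem_filter, Finset.mem_univ, true_and] at hp ⊢
        obtain ⟨y, hy, hfy⟩ := hq.1
        exact ⟨⟨y, hy.trans hp.1, hfy⟩, hp.2⟩
      have hzero : ∀ p ∈ Finset.univ.filter (fun p : P => (∃ y ≤ p, f y ≠ 0) ∧ p ≤ w),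
          p ∉ Finset.univ.filter (fun p : P => q ≤ p ∧ p ≤ w) → mu q p = 0 := by
        intro p hp hp'
        simp only [Finset.mem_filter, Finset.mem_univ, true_and] at hp hp'
        exact hmu_not q p (fun h => hp' ⟨h, hp.2⟩)
      rw [← Finset.sum_subset hsub hzero, hmusum q w hq.2]
    rw [Finset.sum_congr rfl hinner]
    simp_rw [mul_ite, mul_one, mul_zero]
    rw [Finset.sum_ite_eq' _ w (fun q => f q)]
    by_cases hw : w ∈ Finset.univ.filter (fun p : P => (∃ y ≤ p, f y ≠ 0) ∧ p ≤ w)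
    · rw [if_pos hw]
    · rw [if_neg hw]
      simp only [Finset.mem_filter, Finset.mem_univ, true_and, le_refl, and_true] at hw
      by_contra h
      exact hw ⟨w, le_refl _, fun h' => h h'.symm⟩
  -- the matrix factorization
  set Z : Matrix (Fin n) (Fin n) ℝ :=
    Matrix.of (fun i j : Fin n => if x j ≤ x i then (1 : ℝ) else 0) with hZ
  set D : Matrix (Fin n) (Fin n) ℝ := Matrix.diagonal (fun k => g (x k)) with hD
  have hA : (Matrix.of fun i j : Fin n => f (x i ⊓ x j)) = Z * D * Zᵀ := by
    ext i j
    rw [Matrix.mul_apply]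
    have hentry : ∀ k : Fin n, (Z * D) i k * Zᵀ k j
        = if x k ≤ x i ⊓ x j then g (x k) else 0 := by
      intro k
      rw [Matrix.mul_diagonal, Matrix.transpose_apply]
      simp only [hZ, Matrix.of_apply, le_inf_iff]
      by_cases h1 : x k ≤ x i <;> by_cases h2 : x k ≤ x j <;>
        simp [h1, h2]
    rw [Finset.sum_congr rfl (fun k _ => hentry k), Finset.sum_ite, Finset.sum_const_zero,
      add_zero, hkey (x i ⊓ x j)]
    rfl
  -- Z is unitriangular with respect to a linear extension, so det Z = 1
  have hdetZ : Z.det = 1 := by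
    set key : Fin n → LinearExtension P := fun i => toLinearExtension (x i) with hkeydef
    set σ : Equiv.Perm (Fin n) := Tuple.sort key with hσ
    have hmono := Tuple.monotone_sort key
    have h1 : Z.det = (Z.submatrix σ σ).det := (Matrix.det_submatrix_equiv_self σ Z).symm
    rw [h1, Matrix.det_of_lowerTriangular]
    · apply Finset.prod_eq_one
      intro a _
      simp [hZ, Matrix.submatrix_apply]
    · intro i j hij
      have hij' : i < j := hij
      simp only [Matrix.submatrix_apply, hZ, Matrix.of_apply, ite_eq_right_iff]
      intro hle
      exfalso
      have h2 : key (σ j) ≤ key (σ i) := toLinearExtension.monotone hle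
      have h3 : key (σ i) ≤ key (σ j) := hmono hij'.le
      have h4 : x (σ i) = x (σ j) := by
        have : key (σ i) = key (σ j) := le_antisymm h3 h2
        exact (fun a b (h : toLinearExtension a = toLinearExtension b) => h) _ _ this
      exact absurd (σ.injective (hx h4)) (ne_of_lt hij')
  rw [hA, Matrix.det_mul, Matrix.det_mul, Matrix.det_transpose, hdetZ, hD,
    Matrix.det_diagonal]
  rw [one_mul, mul_one]
end

section
/- Let S = {x₁,…,xₙ} be a subset of a finite lattice P = {x₁,…,xₘ}, let f : P → ℝ, and let A be the n×n matrix with a_{ij} = f(xᵢ ∧ xⱼ). Then A = E Λ Eᵀ, where E is the n×m matrix with e_{ij} = 1 if xⱼ ≤ xᵢ and 0 otherwise, and Λ is the m×m diagonal matrix whose r-th diagonal entry is Ψ_f(x_r) = Σ_{xⱼ ≤ x_r} f(xⱼ) μ(xⱼ, x_r), with μ the Möbius function of P. -/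
open scoped Classical
open Matrix

theorem stmt_14 {P : Type*} [Fintype P] [Lattice P] (f : P → ℝ)
    (mu : P → P → ℝ)
    (hmu_refl : ∀ x : P, mu x x = 1)
    (hmu_lt : ∀ x y : P, x < y →
      mu x y = -∑ z ∈ Finset.univ.filter (fun z : P => x ≤ z ∧ z < y), mu x z)
    (hmu_not : ∀ x y : P, ¬ x ≤ y → mu x y = 0)
    (n m : ℕ) (hnm : n ≤ m) (x : Fin m → P) (hx : Function.Bijective x) :
    (Matrix.of fun i j : Fin n => f (x (Fin.castLE hnm i) ⊓ x (Fin.castLE hnm j))) =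
      (Matrix.of fun (i : Fin n) (j : Fin m) =>
          if x j ≤ x (Fin.castLE hnm i) then (1 : ℝ) else 0) *
        Matrix.diagonal (fun r : Fin m =>
          ∑ y ∈ Finset.univ.filter (fun y : P => y ≤ x r), f y * mu y (x r)) *
        (Matrix.of fun (i : Fin n) (j : Fin m) =>
          if x j ≤ x (Fin.castLE hnm i) then (1 : ℝ) else 0)ᵀ := by
  -- key Möbius inversion lemma
  have mob : ∀ a y : P, (∑ p ∈ Finset.univ.filter (fun p => p ≤ a), mu y p)
      = if y = a then 1 else 0 := by
    intro a y
    by_cases hya : y ≤ a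
    · have h1 : ∑ p ∈ Finset.univ.filter (fun p => p ≤ a), mu y p
          = ∑ p ∈ Finset.univ.filter (fun p => y ≤ p ∧ p ≤ a), mu y p := by
        rw [Finset.sum_filter, Finset.sum_filter]
        apply Finset.sum_congr rfl
        intro p _
        by_cases h1 : p ≤ a <;> by_cases h2 : y ≤ p <;>
          simp [h1, h2, hmu_not y p]
      rw [h1]
      rcases eq_or_lt_of_le hya with h | h
      · subst h
        have : Finset.univ.filter (fun p => y ≤ p ∧ p ≤ y) = {y} := by
          ext p; simp [le_antisymm_iff, and_comm]
        simp [this, hmu_refl]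
      · rw [if_neg h.ne]
        have hsplit : Finset.univ.filter (fun p => y ≤ p ∧ p ≤ a)
            = insert a (Finset.univ.filter (fun p => y ≤ p ∧ p < a)) := by
          ext p
          simp only [Finset.mem_insert, Finset.mem_filter, Finset.mem_univ, true_and]
          constructor
          · rintro ⟨h1, h2⟩
            rcases eq_or_lt_of_le h2 with h3 | h3
            · exact Or.inl h3
            · exact Or.inr ⟨h1, h3⟩
          · rintro (rfl | ⟨h1, h2⟩)
            · exact ⟨hya, le_refl _⟩
            · exact ⟨h1, h2.le⟩
        rw [hsplit, Finset.sum_insert (by simp), hmu_lt y a h]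
        ring
    · rw [if_neg (fun h : y = a => hya (le_of_eq h))]
      apply Finset.sum_eq_zero
      intro p hp
      simp only [Finset.mem_filter] at hp
      exact hmu_not y p (fun hyp => hya (hyp.trans hp.2))
  ext i j
  set a := x (Fin.castLE hnm i) ⊓ x (Fin.castLE hnm j) with ha
  have key : ∀ p : P,
      (if p ≤ x (Fin.castLE hnm i) then (1:ℝ) else 0) *
        (∑ y ∈ Finset.univ.filter (fun y : P => y ≤ p), f y * mu y p) *
        (if p ≤ x (Fin.castLE hnm j) then (1:ℝ) else 0)
      = if p ≤ a then ∑ y : P, f y * mu y p else 0 := by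
    intro p
    have hinner : (∑ y ∈ Finset.univ.filter (fun y : P => y ≤ p), f y * mu y p)
        = ∑ y : P, f y * mu y p := by
      rw [Finset.sum_filter]
      apply Finset.sum_congr rfl
      intro y _
      by_cases h : y ≤ p
      · simp [h]
      · simp [h, hmu_not y p h]
    rw [hinner]
    by_cases h1 : p ≤ x (Fin.castLE hnm i) <;> by_cases h2 : p ≤ x (Fin.castLE hnm j) <;>
      simp [h1, h2, ha, le_inf_iff]
  have hRHS : (∑ k : Fin m,
      (if x k ≤ x (Fin.castLE hnm i) then (1:ℝ) else 0) *
        (∑ y ∈ Finset.univ.filter (fun y : P => y ≤ x k), f y * mu y (x k)) *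
        (if x k ≤ x (Fin.castLE hnm j) then (1:ℝ) else 0)) = f a := by
    rw [Fintype.sum_bijective x hx _ (fun p : P =>
      (if p ≤ x (Fin.castLE hnm i) then (1:ℝ) else 0) *
        (∑ y ∈ Finset.univ.filter (fun y : P => y ≤ p), f y * mu y p) *
        (if p ≤ x (Fin.castLE hnm j) then (1:ℝ) else 0)) (fun k => rfl)]
    calc (∑ p : P, (if p ≤ x (Fin.castLE hnm i) then (1:ℝ) else 0) *
        (∑ y ∈ Finset.univ.filter (fun y : P => y ≤ p), f y * mu y p) *
        (if p ≤ x (Fin.castLE hnm j) then (1:ℝ) else 0))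
        = ∑ p : P, if p ≤ a then ∑ y : P, f y * mu y p else 0 := by
          exact Finset.sum_congr rfl fun p _ => key p
      _ = ∑ p ∈ Finset.univ.filter (fun p => p ≤ a), ∑ y : P, f y * mu y p := by
          rw [Finset.sum_filter]
      _ = ∑ y : P, f y * ∑ p ∈ Finset.univ.filter (fun p => p ≤ a), mu y p := by
          rw [Finset.sum_comm]
          exact Finset.sum_congr rfl fun y _ => by rw [Finset.mul_sum]
      _ = ∑ y : P, f y * (if y = a then 1 else 0) := by
          exact Finset.sum_congr rfl fun y _ => by rw [mob]
      _ = f a := by simp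
  simp only [Matrix.mul_apply, Matrix.of_apply, Matrix.transpose_apply,
    Matrix.diagonal_apply, mul_ite, mul_zero, ite_mul, zero_mul,
    Finset.sum_ite_eq', Finset.mem_univ, if_true]
  rw [← hRHS]
  apply Finset.sum_congr rfl
  intro k _
  by_cases h1 : x k ≤ x (Fin.castLE hnm i) <;>
    by_cases h2 : x k ≤ x (Fin.castLE hnm j) <;> simp [h1, h2]
end
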